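/- Let z ∈ Ĩ_n with ĉ(z) = (c_1,...,c_n), let i ∈ [n] with z(i) > z(i+1), and let z' = z s_i if z s_i = s_i z, else z' = s_i z s_i. If i is a visible descent of z, then ĉ(z') is obtained from ĉ(z) by replacing positions i, i+1 with c_{i+1}, c_i − 1 (indices mod n). If i is not a visible descent: when z(i+1) = i+1, ĉ(z') agrees with ĉ(z) except position i is c_i − 1; when z(i+1) ≠ i+1, ĉ(z') agrees with ĉ(z) except that the entry c_j is decreased by 1, where j ∈ [n] \ {i} is congruent to z(i+1) mod n. -/

import Mathlib

open scoped TensorProduct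

/-- Membership in the affine symmetric group `S̃_n`, viewed inside `Equiv.Perm ℤ`. -/
def IsAffine (n : ℕ) (π : Equiv.Perm ℤ) : Prop :=
  (∀ i : ℤ, π (i + n) = π i + n) ∧
  (∑ i ∈ Finset.Icc (1 : ℤ) (n : ℤ), π i) = ∑ i ∈ Finset.Icc (1 : ℤ) (n : ℤ), i

/-- The underlying function of the affine reflection `t_{ij}`. -/
def affTFun (n : ℕ) (i j k : ℤ) : ℤ :=
  if (k - i) % (n : ℤ) = 0 then k - i + j
  else if (k - j) % (n : ℤ) = 0 then k - j + i
  else k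

theorem affTFun_involutive {n : ℕ} {i j : ℤ} (h : ¬ (j - i) % (n : ℤ) = 0) :
    Function.Involutive (affTFun n i j) := by
  have key : ∀ a : ℤ, a % (n : ℤ) = 0 ↔ (n : ℤ) ∣ a :=
    fun a => (@Int.dvd_iff_emod_eq_zero (n : ℤ) a).symm
  rw [key] at h
  intro k
  by_cases h1 : (n : ℤ) ∣ (k - i)
  · have h2 : ¬ (n : ℤ) ∣ (k - i + j - i) := by
      intro hd
      apply h
      have h5 : j - i = (k - i + j - i) - (k - i) := by ring
      rw [h5]
      exact dvd_sub hd h1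
    have h3 : (n : ℤ) ∣ (k - i + j - j) := by
      have h5 : k - i + j - j = k - i := by ring
      rw [h5]; exact h1
    have e1 : affTFun n i j k = k - i + j := by simp [affTFun, key, h1]
    have e2 : affTFun n i j (k - i + j) = k := by
      simp only [affTFun, key]
      rw [if_neg h2, if_pos h3]
      ring
    rw [e1, e2]
  · by_cases h2 : (n : ℤ) ∣ (k - j)
    · have h3 : (n : ℤ) ∣ (k - j + i - i) := by
        have h5 : k - j + i - i = k - j := by ring
        rw [h5]; exact h2
      have e1 : affTFun n i j k = k - j + i := by simp [affTFun, key, h1, h2]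
      have e2 : affTFun n i j (k - j + i) = k := by
        simp only [affTFun, key]
        rw [if_pos h3]
        ring
      rw [e1, e2]
    · have e1 : affTFun n i j k = k := by simp [affTFun, key, h1, h2]
      rw [e1, e1]

/-- The affine reflection `t_{ij}` (interpreted as the identity when `i ≡ j (mod n)`). -/
noncomputable def affT (n : ℕ) (i j : ℤ) : Equiv.Perm ℤ :=
  if h : (j - i) % (n : ℤ) = 0 then 1
  else Function.Involutive.toPerm _ (affTFun_involutive h)

/-- The simple reflection `s_i = t_{i,i+1}` of `S̃_n`. -/
noncomputable def affS (n : ℕ) (i : ℤ) : Equiv.Perm ℤ := affT n i (i + 1)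

/-- Coxeter length: minimal length of a word in the simple reflections `s_1, …, s_n`. -/
noncomputable def wordLength (n : ℕ) (π : Equiv.Perm ℤ) : ℕ :=
  sInf {l : ℕ | ∃ w : List ℤ,
    (∀ x ∈ w, 1 ≤ x ∧ x ≤ (n : ℤ)) ∧ (w.map (affS n)).prod = π ∧ w.length = l}

/-- The set of inversions of `π`, up to the diagonal translation relation. -/
def InvPair (π : Equiv.Perm ℤ) : Type :=
  {p : ℤ × ℤ // p.1 < p.2 ∧ π p.2 < π p.1}

/-- The number of equivalence classes of inversions of `π` under
`(a,b) ~ (a + mn, b + mn)`. -/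
noncomputable def invLength (n : ℕ) (π : Equiv.Perm ℤ) : ℕ :=
  Nat.card (Quot fun p q : InvPair π =>
    ∃ m : ℤ, q.1.1 = p.1.1 + m * n ∧ q.1.2 = p.1.2 + m * n)

/-- Entry `c_i` of the code of an affine permutation. -/
noncomputable def codeEntry (π : Equiv.Perm ℤ) (i : ℤ) : ℕ :=
  Nat.card {j : ℤ // i < j ∧ π j < π i}

/-- Entry `ĉ_i` of the involution code of an affine involution. -/
noncomputable def icodeEntry (z : Equiv.Perm ℤ) (i : ℤ) : ℕ :=
  Nat.card {j : ℤ // i < j ∧ z j < z i ∧ z j ≤ i}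

/-- `ℓ'(z)`: `n` minus the number of orbits of `z` acting on `ℤ/nℤ`. -/
noncomputable def lprime (n : ℕ) (z : Equiv.Perm ℤ) : ℕ :=
  n - Nat.card (Quot fun a b : ZMod n => ((z (a.val : ℤ) : ℤ) : ZMod n) = b)

/-- The characterizing properties of the Demazure (0-Hecke) product on `S̃_n`:
closure, associativity, `s_i ∘ s_i = s_i`, and agreement with the group product
on length-additive factorizations. -/
def IsDemazure (n : ℕ) (D : Equiv.Perm ℤ → Equiv.Perm ℤ → Equiv.Perm ℤ) : Prop :=
  (∀ a b, IsAffine n a → IsAffine n b → IsAffine n (D a b)) ∧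
  (∀ a b c, IsAffine n a → IsAffine n b → IsAffine n c →
    D (D a b) c = D a (D b c)) ∧
  (∀ i : ℤ, D (affS n i) (affS n i) = affS n i) ∧
  (∀ a b, IsAffine n a → IsAffine n b →
    wordLength n (a * b) = wordLength n a + wordLength n b → D a b = a * b)

/-- The set of Hecke atoms `{π : π⁻¹ ∘ π = z}`. -/
def AHecke (n : ℕ) (D : Equiv.Perm ℤ → Equiv.Perm ℤ → Equiv.Perm ℤ)
    (z : Equiv.Perm ℤ) : Set (Equiv.Perm ℤ) :=
  {π | IsAffine n π ∧ D π⁻¹ π = z}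

/-- The set of atoms: minimal-length Hecke atoms. -/
def DemAtoms (n : ℕ) (D : Equiv.Perm ℤ → Equiv.Perm ℤ → Equiv.Perm ℤ)
    (z : Equiv.Perm ℤ) : Set (Equiv.Perm ℤ) :=
  {π | π ∈ AHecke n D z ∧ ∀ σ ∈ AHecke n D z, wordLength n π ≤ wordLength n σ}

/-- The Bruhat covering relation on `S̃_n`. -/
def BruhatCov (n : ℕ) (a b : Equiv.Perm ℤ) : Prop :=
  (∃ i j : ℤ, i < j ∧ (j - i) % (n : ℤ) ≠ 0 ∧ b = a * affT n i j) ∧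
  wordLength n b = wordLength n a + 1

/-- The Bruhat order on `S̃_n`. -/
def BruhatLE (n : ℕ) : Equiv.Perm ℤ → Equiv.Perm ℤ → Prop :=
  Relation.ReflTransGen (BruhatCov n)

/-- The covering relation of the Bruhat order restricted to involutions in `S̃_n`. -/
def BruhatCovI (n : ℕ) (y z : Equiv.Perm ℤ) : Prop :=
  IsAffine n y ∧ IsAffine n z ∧ y⁻¹ = y ∧ z⁻¹ = z ∧
  BruhatLE n y z ∧ y ≠ z ∧
  ∀ w : Equiv.Perm ℤ, IsAffine n w → w⁻¹ = w →
    BruhatLE n y w → BruhatLE n w z → w = y ∨ w = z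

/-- Strict dominance order on partitions (written as weakly decreasing functions). -/
def DomLT (p q : ℕ → ℕ) : Prop :=
  p ≠ q ∧ ∀ k : ℕ, ∑ i ∈ Finset.range k, p i ≤ ∑ i ∈ Finset.range k, q i

/-- The shape `λ(π)`: the transpose of the partition sorting the code of `π⁻¹`,
recorded as the weakly decreasing function `k ↦ λ(π)_{k+1}`. -/
noncomputable def affShape (n : ℕ) (π : Equiv.Perm ℤ) : ℕ → ℕ :=
  fun k => Multiset.countP (fun x => k < x)
    ((Finset.Icc (1 : ℤ) (n : ℤ)).val.map (codeEntry π⁻¹))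

/-- The shape `μ(z)`: the transpose of the partition sorting the involution code of `z`,
recorded as the weakly decreasing function `k ↦ μ(z)_{k+1}`. -/
noncomputable def invShape (n : ℕ) (z : Equiv.Perm ℤ) : ℕ → ℕ :=
  fun k => Multiset.countP (fun x => k < x)
    ((Finset.Icc (1 : ℤ) (n : ℤ)).val.map (icodeEntry z))

/-- The weakly decreasing rearrangement of a multiset of naturals, padded by zeros. -/
noncomputable def rearr (s : Multiset ℕ) : ℕ → ℕ :=
  fun k => ((s.sort (· ≤ ·)).reverse).getD k 0

/-- Remove the entries of a list of integers that repeat an earlier residue mod `n`. -/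
def dedupMod (n : ℕ) : List ℤ → List ℤ
  | [] => []
  | x :: xs => x :: dedupMod n (xs.filter fun y => (y - x) % (n : ℤ) ≠ 0)
termination_by l => l.length
decreasing_by
  simp only [List.length_cons]
  first
  | exact Nat.lt_succ_of_le (List.length_filter_le _ _)
  | exact Nat.lt_succ_of_le (by
      simp only [List.length_unattach]
      exact (List.length_filter_le _ _).trans_eq List.length_attach)

/-- The window `[[z(a₁), a₁, z(a₂), a₂, …]]` of `α_min(z)⁻¹`, where `a₁ < a₂ < ⋯`
are the elements `a ∈ [n]` with `a ≤ z(a)`. -/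
noncomputable def aminWindow (n : ℕ) (z : Equiv.Perm ℤ) : List ℤ :=
  dedupMod n
    ((((Finset.Icc (1 : ℤ) (n : ℤ)).sort (· ≤ ·)).filter fun a => a ≤ z a).flatMap
      fun a => [z a, a])

/-- Cyclically decreasing elements of `S̃_n`. -/
def IsCycDec (n : ℕ) (π : Equiv.Perm ℤ) : Prop :=
  ∃ w : List ℤ,
    (∀ x ∈ w, 1 ≤ x ∧ x ≤ (n : ℤ)) ∧ (w.map (affS n)).prod = π ∧
    w.length = wordLength n π ∧
    w.Pairwise fun a b => (a + 1 - b) % (n : ℤ) ≠ 0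

/-- The coefficient of the monomial `∏ₖ xₖ₊₁^(α k)` in Lam's affine Stanley symmetric
function `F_π`: the number of length-additive factorizations of `π` into cyclically
decreasing factors of lengths prescribed by `α`. -/
noncomputable def stanleyCoeff (n : ℕ) (π : Equiv.Perm ℤ) (α : ℕ →₀ ℕ) : ℕ :=
  Nat.card {f : ℕ → Equiv.Perm ℤ //
    (∀ k, IsCycDec n (f k)) ∧ (∀ k, wordLength n (f k) = α k) ∧
    (∑ k ∈ α.support, α k) = wordLength n π ∧
    ∃ N : ℕ, (∀ k, N ≤ k → f k = 1) ∧ ((List.range N).map f).prod = π}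

/-- The set `Φ⁻_r(y)` of Bruhat covers of `y` of the form `τⁿ_{i r}(y)` with `i < r`
and `i ∉ {r, y(r)} + nℤ`. -/
def PhiMinus (n : ℕ) (τ : ℤ → ℤ → Equiv.Perm ℤ → Equiv.Perm ℤ)
    (y : Equiv.Perm ℤ) (r : ℤ) : Set (Equiv.Perm ℤ) :=
  {z | BruhatCovI n y z ∧ ∃ i : ℤ, i < r ∧ (i - r) % (n : ℤ) ≠ 0 ∧
    (i - y r) % (n : ℤ) ≠ 0 ∧ z = τ i r y}

/-- The set `Φ⁺_r(y)` of Bruhat covers of `y` of the form `τⁿ_{r j}(y)` with `r < j`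
and `j ∉ {r, y(r)} + nℤ`. -/
def PhiPlus (n : ℕ) (τ : ℤ → ℤ → Equiv.Perm ℤ → Equiv.Perm ℤ)
    (y : Equiv.Perm ℤ) (r : ℤ) : Set (Equiv.Perm ℤ) :=
  {z | BruhatCovI n y z ∧ ∃ j : ℤ, r < j ∧ (j - r) % (n : ℤ) ≠ 0 ∧
    (j - y r) % (n : ℤ) ≠ 0 ∧ z = τ r j y}

/-- The affine symmetric group as a subtype of `Equiv.Perm ℤ`. -/
abbrev AffPerm (n : ℕ) := {π : Equiv.Perm ℤ // IsAffine n π}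

/-- The coproduct `Δ(π) = Σ_{π ≐ π'π''} π' ⊗ π''` on `ℚ S̃_n`. -/
noncomputable def affComul (n : ℕ) :
    (AffPerm n →₀ ℚ) →ₗ[ℚ] TensorProduct ℚ (AffPerm n →₀ ℚ) (AffPerm n →₀ ℚ) :=
  Finsupp.lift _ ℚ _ fun π : AffPerm n =>
    ∑ᶠ p ∈ {p : AffPerm n × AffPerm n |
        p.1.val * p.2.val = π.val ∧
        wordLength n π.val = wordLength n p.1.val + wordLength n p.2.val},
      (Finsupp.single p.1 (1 : ℚ)) ⊗ₜ[ℚ] (Finsupp.single p.2 (1 : ℚ))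

namespace ICodeAux

open Equiv

lemma tri {n : ℕ} (hn : 2 ≤ n) {d : ℤ} (h : (n:ℤ) ∣ d) :
    d = 0 ∨ (n:ℤ) ≤ d ∨ d ≤ -(n:ℤ) := by
  rcases lt_trichotomy d 0 with h1 | h1 | h1
  · refine Or.inr (Or.inr ?_)
    have := Int.le_of_dvd (by omega) (dvd_neg.mpr h)
    omega
  · exact Or.inl h1
  · exact Or.inr (Or.inl (Int.le_of_dvd h1 h))

lemma one_not_dvd {n : ℕ} (hn : 2 ≤ n) : ¬ (n:ℤ) ∣ 1 := by
  intro h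
  have := Int.le_of_dvd one_pos h
  omega

lemma fper {n : ℕ} {f : ℤ → ℤ} (hf : ∀ x : ℤ, f (x + (n:ℤ)) = f x + (n:ℤ)) {x y : ℤ}
    (h : (n:ℤ) ∣ (y - x)) : f y = f x + (y - x) := by
  obtain ⟨m, hm⟩ := h
  have key : ∀ m : ℤ, ∀ x : ℤ, f (x + (n:ℤ) * m) = f x + (n:ℤ) * m := by
    intro m
    induction m using Int.induction_on with
    | zero => simp
    | succ k ih =>
        intro x
        have h1 : x + (n:ℤ) * ((k:ℤ) + 1) = (x + (n:ℤ)*(k:ℤ)) + (n:ℤ) := by ring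
        rw [h1, hf, ih]; ring
    | pred k ih =>
        intro x
        have h2 := hf (x + (n:ℤ) * (-(k:ℤ) - 1))
        have h1 : x + (n:ℤ) * (-(k:ℤ) - 1) + (n:ℤ) = x + (n:ℤ) * (-(k:ℤ)) := by ring
        rw [h1, ih] at h2
        have h3 : (n:ℤ) * (-(k:ℤ) - 1) = (n:ℤ) * (-(k:ℤ)) - (n:ℤ) := by ring
        omega
  have hy : y = x + (n:ℤ) * m := by omega
  rw [hy, key m x]
  omega

lemma saux {n : ℕ} (hn : 2 ≤ n) (i : ℤ) : ¬ ((i + 1) - i) % (n:ℤ) = 0 := by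
  have h1 : (i + 1) - i = 1 := by ring
  rw [h1, Int.emod_eq_of_lt (by norm_num) (by exact_mod_cast hn)]
  norm_num

lemma sf_eq {n : ℕ} (hn : 2 ≤ n) (i x : ℤ) : affS n i x = affTFun n i (i+1) x := by
  rw [affS, affT, dif_neg (saux hn i)]
  rfl

lemma s_hi {n : ℕ} (hn : 2 ≤ n) {i x : ℤ} (h : (n:ℤ) ∣ (x - i)) : affS n i x = x + 1 := by
  rw [sf_eq hn, affTFun, if_pos (Int.emod_eq_zero_of_dvd h)]
  ring

lemma s_lo {n : ℕ} (hn : 2 ≤ n) {i x : ℤ} (h : (n:ℤ) ∣ (x - (i+1))) : affS n i x = x - 1 := by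
  have h2 : ¬ (x - i) % (n:ℤ) = 0 := by
    intro hc
    have h3 : (n:ℤ) ∣ ((x - i) - (x - (i+1))) := dvd_sub (Int.dvd_of_emod_eq_zero hc) h
    have h4 : (x - i) - (x - (i+1)) = 1 := by ring
    rw [h4] at h3
    exact one_not_dvd hn h3
  rw [sf_eq hn, affTFun, if_neg h2, if_pos (Int.emod_eq_zero_of_dvd h)]
  ring

lemma s_other {n : ℕ} (hn : 2 ≤ n) {i x : ℤ} (h1 : ¬ (n:ℤ) ∣ (x - i))
    (h2 : ¬ (n:ℤ) ∣ (x - (i+1))) : affS n i x = x := by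
  rw [sf_eq hn, affTFun, if_neg (fun hc => h1 (Int.dvd_of_emod_eq_zero hc)),
      if_neg (fun hc => h2 (Int.dvd_of_emod_eq_zero hc))]

lemma s_invol {n : ℕ} (hn : 2 ≤ n) (i x : ℤ) : affS n i (affS n i x) = x := by
  rw [sf_eq hn, sf_eq hn]
  exact affTFun_involutive (saux hn i) x

lemma s_per {n : ℕ} (hn : 2 ≤ n) (i : ℤ) : ∀ x : ℤ, affS n i (x + (n:ℤ)) = affS n i x + (n:ℤ) := by
  intro x
  by_cases h1 : (n:ℤ) ∣ (x - i)
  · rw [s_hi hn h1, s_hi hn (by obtain ⟨m, hm⟩ := h1; exact ⟨m+1, by linear_combination hm⟩)]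
    ring
  · by_cases h2 : (n:ℤ) ∣ (x - (i+1))
    · rw [s_lo hn h2, s_lo hn (by obtain ⟨m, hm⟩ := h2; exact ⟨m+1, by linear_combination hm⟩)]
      ring
    · rw [s_other hn h1 h2, s_other hn (fun hc => h1 (by obtain ⟨m, hm⟩ := hc; exact ⟨m-1, by linear_combination hm⟩))
        (fun hc => h2 (by obtain ⟨m, hm⟩ := hc; exact ⟨m-1, by linear_combination hm⟩))]

end ICodeAux
namespace ICodeAux

section Facts

variable {n : ℕ} {z : Equiv.Perm ℤ} {i : ℤ}

lemma trans_zi (hper : ∀ x : ℤ, z (x + (n:ℤ)) = z x + (n:ℤ))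
    (hinv : ∀ x : ℤ, z (z x) = x) {j : ℤ} (h : (n:ℤ) ∣ (z j - i)) :
    j = z i + (z j - i) := by
  have h1 : z (z j) = z i + (z j - i) := fper hper h
  rw [hinv] at h1
  exact h1

lemma trans_zi1 (hper : ∀ x : ℤ, z (x + (n:ℤ)) = z x + (n:ℤ))
    (hinv : ∀ x : ℤ, z (z x) = x) {j : ℤ} (h : (n:ℤ) ∣ (z j - (i+1))) :
    j = z (i+1) + (z j - (i+1)) := by
  have h1 : z (z j) = z (i+1) + (z j - (i+1)) := fper hper h
  rw [hinv] at h1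
  exact h1

lemma val_i (hper : ∀ x : ℤ, z (x + (n:ℤ)) = z x + (n:ℤ)) {j : ℤ}
    (h : (n:ℤ) ∣ (j - i)) : z j = z i + (j - i) := fper hper h

lemma val_i1 (hper : ∀ x : ℤ, z (x + (n:ℤ)) = z x + (n:ℤ)) {j : ℤ}
    (h : (n:ℤ) ∣ (j - (i+1))) : z j = z (i+1) + (j - (i+1)) := fper hper h

lemma Fa_i (hper : ∀ x : ℤ, z (x + (n:ℤ)) = z x + (n:ℤ))
    (hinv : ∀ x : ℤ, z (z x) = x) (h : (n:ℤ) ∣ (z i - i)) : z i = i := by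
  have h1 := trans_zi hper hinv (j := i) h
  omega

lemma Fb_i1 (hper : ∀ x : ℤ, z (x + (n:ℤ)) = z x + (n:ℤ))
    (hinv : ∀ x : ℤ, z (z x) = x) (h : (n:ℤ) ∣ (z (i+1) - (i+1))) : z (i+1) = i + 1 := by
  have h1 := trans_zi1 hper hinv (j := i+1) h
  omega

lemma Fa_i1 (hper : ∀ x : ℤ, z (x + (n:ℤ)) = z x + (n:ℤ))
    (hinv : ∀ x : ℤ, z (z x) = x) (h : (n:ℤ) ∣ (z i - (i+1))) :
    z (i+1) = 2*i + 1 - z i := by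
  have h1 := trans_zi1 hper hinv (j := i) h
  omega

lemma Fb_i (hper : ∀ x : ℤ, z (x + (n:ℤ)) = z x + (n:ℤ))
    (hinv : ∀ x : ℤ, z (z x) = x) (h : (n:ℤ) ∣ (z (i+1) - i)) :
    z i = 2*i + 1 - z (i+1) := by
  have h1 := trans_zi hper hinv (j := i+1) h
  omega

lemma Fab (hn : 2 ≤ n) (hper : ∀ x : ℤ, z (x + (n:ℤ)) = z x + (n:ℤ))
    (hinv : ∀ x : ℤ, z (z x) = x) (h : (n:ℤ) ∣ (z i - z (i+1))) : False := by
  have h1 : z (z i) = z (z (i+1)) + (z i - z (i+1)) := fper hper h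
  rw [hinv, hinv] at h1
  have h2 : z i - z (i+1) = -1 := by omega
  rw [h2] at h
  exact one_not_dvd hn (dvd_neg.mp h)

lemma window_eq (hn : 2 ≤ n) {x y : ℤ} (hx1 : 1 ≤ x) (hx2 : x ≤ (n:ℤ))
    (hy1 : 1 ≤ y) (hy2 : y ≤ (n:ℤ)) (h : (n:ℤ) ∣ (x - y)) : x = y := by
  rcases tri hn h with h1 | h1 | h1 <;> omega

end Facts

section Card

lemma exists_upper {n : ℕ} (hn : 2 ≤ n) (f : ℤ → ℤ)
    (hf : ∀ x : ℤ, f (x + (n:ℤ)) = f x + (n:ℤ)) : ∃ C : ℤ, ∀ x : ℤ, f x ≤ x + C := by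
  have hne : (Finset.Icc (1:ℤ) (n:ℤ)).Nonempty := ⟨1, by simp; omega⟩
  refine ⟨(Finset.Icc (1:ℤ) (n:ℤ)).sup' hne (fun r => f r - r), fun x => ?_⟩
  obtain ⟨u, hu0, hu1, hud⟩ : ∃ u : ℤ, 0 ≤ u ∧ u < (n:ℤ) ∧ (n:ℤ) ∣ (x - (u+1)) := by
    refine ⟨(x - 1) % (n:ℤ), Int.emod_nonneg _ (by positivity),
      Int.emod_lt_of_pos _ (by positivity), ⟨(x - 1) / (n:ℤ), ?_⟩⟩
    have := Int.emod_add_mul_ediv (x - 1) (n:ℤ)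
    omega
  have h2 : f x = f (u+1) + (x - (u+1)) := fper hf hud
  have h3 : f (u+1) - (u+1) ≤ (Finset.Icc (1:ℤ) (n:ℤ)).sup' hne (fun r => f r - r) :=
    Finset.le_sup' (fun r => f r - r)
      (show (u+1) ∈ Finset.Icc (1:ℤ) (n:ℤ) by rw [Finset.mem_Icc]; omega)
  linarith [h2, h3]

lemma finite_V {n : ℕ} (hn : 2 ≤ n) (f : Equiv.Perm ℤ)
    (hf : ∀ x : ℤ, f (x + (n:ℤ)) = f x + (n:ℤ)) (hinv : ∀ x : ℤ, f (f x) = x) (k : ℤ) :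
    {j : ℤ | k < j ∧ f j < f k ∧ f j ≤ k}.Finite := by
  obtain ⟨C, hC⟩ := exists_upper hn f hf
  apply (Set.finite_Ioc k (k + C)).subset
  rintro j ⟨h1, h2, h3⟩
  refine ⟨h1, ?_⟩
  have h4 := hC (f j)
  rw [hinv] at h4
  omega

lemma icode_congr {f g : Equiv.Perm ℤ} {k k' : ℤ} (σ : Equiv.Perm ℤ)
    (h : ∀ j : ℤ, (k < j ∧ f j < f k ∧ f j ≤ k) ↔ (k' < σ j ∧ g (σ j) < g k' ∧ g (σ j) ≤ k')) :
    icodeEntry f k = icodeEntry g k' :=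
  Nat.card_congr (Equiv.subtypeEquiv σ h)

lemma icode_succ {n : ℕ} (hn : 2 ≤ n) {f g : Equiv.Perm ℤ} {k k' p : ℤ} (σ : Equiv.Perm ℤ)
    (hfper : ∀ x : ℤ, f (x + (n:ℤ)) = f x + (n:ℤ)) (hfinv : ∀ x : ℤ, f (f x) = x)
    (hp : k < p ∧ f p < f k ∧ f p ≤ k)
    (h : ∀ j : ℤ, ((k < j ∧ f j < f k ∧ f j ≤ k) ∧ j ≠ p) ↔
      (k' < σ j ∧ g (σ j) < g k' ∧ g (σ j) ≤ k')) :
    icodeEntry f k = icodeEntry g k' + 1 := by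
  have h1 : icodeEntry g k' = Nat.card {j : ℤ // (k < j ∧ f j < f k ∧ f j ≤ k) ∧ j ≠ p} :=
    (Nat.card_congr (Equiv.subtypeEquiv σ h)).symm
  have h2 : Nat.card {j : ℤ // (k < j ∧ f j < f k ∧ f j ≤ k) ∧ j ≠ p} =
      ({j : ℤ | k < j ∧ f j < f k ∧ f j ≤ k} \ {p}).ncard := by
    rw [← Nat.card_coe_set_eq]
    apply Nat.card_congr
    apply Equiv.subtypeEquivRight
    intro x
    simp only [Set.mem_diff, Set.mem_setOf_eq, Set.mem_singleton_iff]
  have h3 : icodeEntry f k = ({j : ℤ | k < j ∧ f j < f k ∧ f j ≤ k}).ncard := by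
    rw [icodeEntry, ← Nat.card_coe_set_eq]
    rfl
  rw [h1, h2, h3]
  have hmem : p ∈ {j : ℤ | k < j ∧ f j < f k ∧ f j ≤ k} := hp
  exact (Set.ncard_diff_singleton_add_one hmem (finite_V hn f hfper hfinv k)).symm

lemma icode_shift {n : ℕ} (f : Equiv.Perm ℤ)
    (hf : ∀ x : ℤ, f (x + (n:ℤ)) = f x + (n:ℤ)) {d : ℤ} (hd : (n:ℤ) ∣ d) (k : ℤ) :
    icodeEntry f (k + d) = icodeEntry f k := by
  apply icode_congr (Equiv.addRight (-d))
  intro j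
  have e1 : f j = f (j + -d) + d := by
    have := fper hf (x := j + -d) (y := j) (by simpa using hd)
    omega
  have e2 : f (k + d) = f k + d := by
    have := fper hf (x := k) (y := k + d) (by simpa using hd)
    omega
  simp only [Equiv.coe_addRight]
  constructor <;> rintro ⟨a1, a2, a3⟩ <;> omega

end Card

end ICodeAux
namespace ICodeAux

section Comp

variable {n : ℕ} {i : ℤ}

lemma lt_s_iff (hn : 2 ≤ n) {k j : ℤ} (hk1 : ¬ (n:ℤ) ∣ (k - i)) (hk2 : ¬ (n:ℤ) ∣ (k - (i+1))) :
    k < affS n i j ↔ k < j := by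
  by_cases h1 : (n:ℤ) ∣ (j - i)
  · rw [s_hi hn h1]
    have hne : k ≠ j := fun h => hk1 (h ▸ h1)
    omega
  · by_cases h2 : (n:ℤ) ∣ (j - (i+1))
    · rw [s_lo hn h2]
      have hne : k ≠ j - 1 := fun h => hk1 (by
        rw [h, show j - 1 - i = j - (i+1) from by ring]; exact h2)
      omega
    · rw [s_other hn h1 h2]

lemma le_s_iff (hn : 2 ≤ n) {k u : ℤ} (hk1 : ¬ (n:ℤ) ∣ (k - i)) (hk2 : ¬ (n:ℤ) ∣ (k - (i+1))) :
    affS n i u ≤ k ↔ u ≤ k := by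
  by_cases h1 : (n:ℤ) ∣ (u - i)
  · rw [s_hi hn h1]
    have hne : k ≠ u := fun h => hk1 (h ▸ h1)
    omega
  · by_cases h2 : (n:ℤ) ∣ (u - (i+1))
    · rw [s_lo hn h2]
      have hne : k ≠ u - 1 := fun h => hk1 (by
        rw [h, show u - 1 - i = u - (i+1) from by ring]; exact h2)
      omega
    · rw [s_other hn h1 h2]

lemma s_lt_s (hn : 2 ≤ n) {u v : ℤ} (hv1 : ¬ (n:ℤ) ∣ (v - i)) (hv2 : ¬ (n:ℤ) ∣ (v - (i+1))) :
    affS n i u < affS n i v ↔ u < v := by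
  rw [s_other hn hv1 hv2]
  by_cases h1 : (n:ℤ) ∣ (u - i)
  · rw [s_hi hn h1]
    have hne : v ≠ u + 1 := fun h => hv2 (by
      rw [h, show u + 1 - (i+1) = u - i from by ring]; exact h1)
    omega
  · by_cases h2 : (n:ℤ) ∣ (u - (i+1))
    · rw [s_lo hn h2]
      have hne : v ≠ u - 1 := fun h => hv1 (by
        rw [h, show u - 1 - i = u - (i+1) from by ring]; exact h2)
      have hne2 : v ≠ u := fun h => hv2 (h ▸ h2)
      omega
    · rw [s_other hn h1 h2]

end Comp

section Conj

variable {n : ℕ} {z z' : Equiv.Perm ℤ} {i : ℤ}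

/-- unchanged entries, fully generic position -/
lemma conj_generic (hn : 2 ≤ n)
    (hz'app : ∀ x : ℤ, z' x = affS n i (z (affS n i x))) {k : ℤ}
    (hk1 : ¬ (n:ℤ) ∣ (k - i)) (hk2 : ¬ (n:ℤ) ∣ (k - (i+1)))
    (hzk1 : ¬ (n:ℤ) ∣ (z k - i)) (hzk2 : ¬ (n:ℤ) ∣ (z k - (i+1))) :
    icodeEntry z k = icodeEntry z' k := by
  apply icode_congr (affS n i)
  intro j
  have e1 : z' (affS n i j) = affS n i (z j) := by rw [hz'app, s_invol hn]
  have e2 : z' k = affS n i (z k) := by rw [hz'app, s_other hn hk1 hk2]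
  rw [e1, e2, lt_s_iff hn hk1 hk2, le_s_iff hn hk1 hk2, s_lt_s hn hzk1 hzk2]

/-- unchanged entries, position congruent to `z i` -/
lemma conj_classa (hn : 2 ≤ n)
    (hper : ∀ x : ℤ, z (x + (n:ℤ)) = z x + (n:ℤ)) (hinv : ∀ x : ℤ, z (z x) = x)
    (hz'app : ∀ x : ℤ, z' x = affS n i (z (affS n i x))) {k : ℤ}
    (hba : z (i+1) < z i)
    (hk1 : ¬ (n:ℤ) ∣ (k - i)) (hk2 : ¬ (n:ℤ) ∣ (k - (i+1)))
    (hzk : (n:ℤ) ∣ (z k - i)) :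
    icodeEntry z k = icodeEntry z' k := by
  apply icode_congr (affS n i)
  intro j
  have e1 : z' (affS n i j) = affS n i (z j) := by rw [hz'app, s_invol hn]
  have e2 : z' k = z k + 1 := by rw [hz'app, s_other hn hk1 hk2, s_hi hn hzk]
  have c1 : k < affS n i j ↔ k < j := lt_s_iff hn hk1 hk2
  rw [e1, e2]
  by_cases hA : (n:ℤ) ∣ (z j - i)
  · have sv : affS n i (z j) = z j + 1 := s_hi hn hA
    have hne : z j ≠ k := fun h => hk1 (h ▸ hA)
    rw [sv]
    omega
  · by_cases hB : (n:ℤ) ∣ (z j - (i+1))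
    · have sv : affS n i (z j) = z j - 1 := s_lo hn hB
      rw [sv]
      by_cases hx : z j = z k + 1
      · have hj : j = z (i+1) + (z j - (i+1)) := trans_zi1 hper hinv hB
        have hk' : k = z i + (z k - i) := trans_zi hper hinv hzk
        constructor
        · rintro ⟨a1, a2, a3⟩; omega
        · rintro ⟨a1, a2, a3⟩; rw [c1] at a1; omega
      · have hne1 : z j ≠ z k := fun h => hA (h ▸ hzk)
        have hne2 : z j ≠ k + 1 := fun h => hk1 (by
          have : k - i = z j - (i+1) := by omega
          rw [this]; exact hB)
        omega
    · have sv : affS n i (z j) = z j := s_other hn hA hB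
      have hne1 : z j ≠ z k := fun h => hA (h ▸ hzk)
      rw [sv]
      omega

/-- unchanged entries, position congruent to `z (i+1)`, visible case -/
lemma conj_classb_vis (hn : 2 ≤ n)
    (hper : ∀ x : ℤ, z (x + (n:ℤ)) = z x + (n:ℤ)) (hinv : ∀ x : ℤ, z (z x) = x)
    (hz'app : ∀ x : ℤ, z' x = affS n i (z (affS n i x))) {k : ℤ}
    (hba : z (i+1) < z i) (hna1 : z i ≠ i + 1) (hvis : z (i+1) ≤ i)
    (hk1 : ¬ (n:ℤ) ∣ (k - i)) (hk2 : ¬ (n:ℤ) ∣ (k - (i+1)))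
    (hzk : (n:ℤ) ∣ (z k - (i+1))) :
    icodeEntry z k = icodeEntry z' k := by
  have hblti : z (i+1) < i := by
    rcases eq_or_lt_of_le hvis with h | h
    · exfalso
      apply hna1
      have := Fb_i hper hinv (by rw [h]; simp)
      omega
    · exact h
  apply icode_congr (affS n i)
  intro j
  have e1 : z' (affS n i j) = affS n i (z j) := by rw [hz'app, s_invol hn]
  have e2 : z' k = z k - 1 := by rw [hz'app, s_other hn hk1 hk2, s_lo hn hzk]
  have c1 : k < affS n i j ↔ k < j := lt_s_iff hn hk1 hk2
  rw [e1, e2]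
  by_cases hA : (n:ℤ) ∣ (z j - i)
  · have sv : affS n i (z j) = z j + 1 := s_hi hn hA
    rw [sv]
    by_cases hx : z j = z k - 1
    · have hj : j = z i + (z j - i) := trans_zi hper hinv hA
      have hk' : k = z (i+1) + (z k - (i+1)) := trans_zi1 hper hinv hzk
      constructor
      · rintro ⟨a1, a2, a3⟩; omega
      · rintro ⟨a1, a2, a3⟩; omega
    · have hne1 : z j ≠ z k := by
        intro h
        have h2 : (n:ℤ) ∣ ((z j - i) - (z k - (i+1))) := dvd_sub hA hzk
        rw [show (z j - i) - (z k - (i+1)) = 1 from by omega] at h2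
        exact one_not_dvd hn h2
      have hne2 : z j ≠ z k - 2 := by
        intro h
        have h2 : (n:ℤ) ∣ ((z k - (i+1)) - (z j - i)) := dvd_sub hzk hA
        rw [show (z k - (i+1)) - (z j - i) = 1 from by omega] at h2
        exact one_not_dvd hn h2
      have hne3 : z j ≠ k := fun h => hk1 (h ▸ hA)
      omega
  · by_cases hB : (n:ℤ) ∣ (z j - (i+1))
    · have sv : affS n i (z j) = z j - 1 := s_lo hn hB
      have hne1 : z j ≠ k + 1 := fun h => hk1 (by
        have h2 : k - i = z j - (i+1) := by omega
        rw [h2]; exact hB)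
      rw [sv]
      omega
    · have sv : affS n i (z j) = z j := s_other hn hA hB
      have hne1 : z j ≠ z k - 1 := fun h => hA (by
        have h2 : z j - i = z k - (i+1) := by omega
        rw [h2]; exact hzk)
      rw [sv]
      omega

end Conj

end ICodeAux
namespace ICodeAux

section Case2

variable {n : ℕ} {z z' : Equiv.Perm ℤ} {i : ℤ}

lemma conj_case2_ki (hn : 2 ≤ n)
    (hper : ∀ x : ℤ, z (x + (n:ℤ)) = z x + (n:ℤ)) (hinv : ∀ x : ℤ, z (z x) = x)
    (hz'app : ∀ x : ℤ, z' x = affS n i (z (affS n i x)))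
    (hb : z (i+1) = i+1) (hagt : i + 1 < z i) :
    icodeEntry z i = icodeEntry z' i + 1 := by
  have hai : ¬ (n:ℤ) ∣ (z i - i) := fun h => by
    have := Fa_i hper hinv h; omega
  have hai1 : ¬ (n:ℤ) ∣ (z i - (i+1)) := fun h => by
    have := Fa_i1 hper hinv h; omega
  have hzz : z (z i) = i := hinv i
  apply icode_succ hn (affS n i) hper hinv (p := z i) ⟨by omega, by omega, by omega⟩
  intro j
  have e1 : z' (affS n i j) = affS n i (z j) := by rw [hz'app, s_invol hn]
  have e2 : z' i = i := by
    rw [hz'app, s_hi hn (show ((n:ℕ):ℤ) ∣ (i - i) by simp), hb,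
        s_lo hn (show ((n:ℕ):ℤ) ∣ (i + 1 - (i+1)) by simp)]
    ring
  rw [e1, e2]
  by_cases hA : (n:ℤ) ∣ (z j - i)
  · have sv : affS n i (z j) = z j + 1 := s_hi hn hA
    have hj : j = z i + (z j - i) := trans_zi hper hinv hA
    have hji : ¬ (n:ℤ) ∣ (j - i) := by
      intro h
      have h2 := dvd_sub h hA
      rw [show (j - i) - (z j - i) = z i - i from by omega] at h2
      exact hai h2
    have hji1 : ¬ (n:ℤ) ∣ (j - (i+1)) := by
      intro h
      have h2 := dvd_sub h hA
      rw [show (j - (i+1)) - (z j - i) = z i - (i+1) from by omega] at h2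
      exact hai1 h2
    have sj : affS n i j = j := s_other hn hji hji1
    have htr := tri hn hA
    rw [sv, sj]
    omega
  · by_cases hB : (n:ℤ) ∣ (z j - (i+1))
    · have sv : affS n i (z j) = z j - 1 := s_lo hn hB
      have hj : j = z (i+1) + (z j - (i+1)) := trans_zi1 hper hinv hB
      have hji1 : (n:ℤ) ∣ (j - (i+1)) := by
        have h2 := hB
        rw [show z j - (i+1) = j - (i+1) from by omega] at h2
        exact h2
      have sj : affS n i j = j - 1 := s_lo hn hji1
      rw [sv, sj]
      omega
    · have sv : affS n i (z j) = z j := s_other hn hA hB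
      by_cases hC : (n:ℤ) ∣ (j - i)
      · have hzj : z j = z i + (j - i) := val_i hper hC
        have sj : affS n i j = j + 1 := s_hi hn hC
        have hne : j ≠ z i := by
          intro h
          apply hai
          rw [show z i - i = j - i from by omega]
          exact hC
        have htr := tri hn hC
        rw [sv, sj]
        omega
      · by_cases hD : (n:ℤ) ∣ (j - (i+1))
        · exfalso
          apply hB
          have hzj : z j = z (i+1) + (j - (i+1)) := val_i1 hper hD
          rw [show z j - (i+1) = j - (i+1) from by omega]
          exact hD
        · have sj : affS n i j = j := s_other hn hC hD
          have hne1 : z j ≠ i := fun h => hA (by rw [h]; simp)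
          have hne2 : j ≠ z i := by
            intro h
            apply hA
            rw [h, hzz]
            simp
          rw [sv, sj]
          omega

lemma conj_case2_ki1 (hn : 2 ≤ n)
    (hper : ∀ x : ℤ, z (x + (n:ℤ)) = z x + (n:ℤ)) (hinv : ∀ x : ℤ, z (z x) = x)
    (hz'app : ∀ x : ℤ, z' x = affS n i (z (affS n i x)))
    (hb : z (i+1) = i+1) (hagt : i + 1 < z i) :
    icodeEntry z (i+1) = icodeEntry z' (i+1) := by
  have hai : ¬ (n:ℤ) ∣ (z i - i) := fun h => by
    have := Fa_i hper hinv h; omega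
  have hai1 : ¬ (n:ℤ) ∣ (z i - (i+1)) := fun h => by
    have := Fa_i1 hper hinv h; omega
  apply icode_congr (affS n i)
  intro j
  have e1 : z' (affS n i j) = affS n i (z j) := by rw [hz'app, s_invol hn]
  have e2 : z' (i+1) = z i := by
    rw [hz'app, s_lo hn (show ((n:ℕ):ℤ) ∣ (i + 1 - (i+1)) by simp),
        show i + 1 - 1 = i from by ring, s_other hn hai hai1]
  rw [e1, e2, hb]
  by_cases hA : (n:ℤ) ∣ (z j - i)
  · have sv : affS n i (z j) = z j + 1 := s_hi hn hA
    have hj : j = z i + (z j - i) := trans_zi hper hinv hA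
    have hji : ¬ (n:ℤ) ∣ (j - i) := by
      intro h
      have h2 := dvd_sub h hA
      rw [show (j - i) - (z j - i) = z i - i from by omega] at h2
      exact hai h2
    have hji1 : ¬ (n:ℤ) ∣ (j - (i+1)) := by
      intro h
      have h2 := dvd_sub h hA
      rw [show (j - (i+1)) - (z j - i) = z i - (i+1) from by omega] at h2
      exact hai1 h2
    have sj : affS n i j = j := s_other hn hji hji1
    rw [sv, sj]
    omega
  · by_cases hB : (n:ℤ) ∣ (z j - (i+1))
    · have sv : affS n i (z j) = z j - 1 := s_lo hn hB
      have hj : j = z (i+1) + (z j - (i+1)) := trans_zi1 hper hinv hB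
      have hji1 : (n:ℤ) ∣ (j - (i+1)) := by
        have h2 := hB
        rw [show z j - (i+1) = j - (i+1) from by omega] at h2
        exact h2
      have sj : affS n i j = j - 1 := s_lo hn hji1
      rw [sv, sj]
      omega
    · have sv : affS n i (z j) = z j := s_other hn hA hB
      by_cases hC : (n:ℤ) ∣ (j - i)
      · have hzj : z j = z i + (j - i) := val_i hper hC
        have sj : affS n i j = j + 1 := s_hi hn hC
        have htr := tri hn hC
        rw [sv, sj]
        omega
      · by_cases hD : (n:ℤ) ∣ (j - (i+1))
        · exfalso
          apply hB
          have hzj : z j = z (i+1) + (j - (i+1)) := val_i1 hper hD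
          rw [show z j - (i+1) = j - (i+1) from by omega]
          exact hD
        · have sj : affS n i j = j := s_other hn hC hD
          have hne1 : z j ≠ i := fun h => hA (by rw [h]; simp)
          have hne2 : z j ≠ i + 1 := fun h => hB (by rw [h]; simp)
          rw [sv, sj]
          omega

end Case2

end ICodeAux
namespace ICodeAux

section Case3

variable {n : ℕ} {z z' : Equiv.Perm ℤ} {i : ℤ}

lemma case3_facts (hn : 2 ≤ n)
    (hper : ∀ x : ℤ, z (x + (n:ℤ)) = z x + (n:ℤ)) (hinv : ∀ x : ℤ, z (z x) = x)
    (hba : z (i+1) < z i) (hb2 : i + 1 < z (i+1)) :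
    ¬ (n:ℤ) ∣ (z i - i) ∧ ¬ (n:ℤ) ∣ (z i - (i+1)) ∧
    ¬ (n:ℤ) ∣ (z (i+1) - i) ∧ ¬ (n:ℤ) ∣ (z (i+1) - (i+1)) := by
  refine ⟨fun h => ?_, fun h => ?_, fun h => ?_, fun h => ?_⟩
  · have := Fa_i hper hinv h; omega
  · have := Fa_i1 hper hinv h; omega
  · have := Fb_i hper hinv h; omega
  · have := Fb_i1 hper hinv h; omega

lemma conj_case3_ki (hn : 2 ≤ n)
    (hper : ∀ x : ℤ, z (x + (n:ℤ)) = z x + (n:ℤ)) (hinv : ∀ x : ℤ, z (z x) = x)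
    (hz'app : ∀ x : ℤ, z' x = affS n i (z (affS n i x)))
    (hba : z (i+1) < z i) (hb2 : i + 1 < z (i+1)) :
    icodeEntry z i = icodeEntry z' i := by
  obtain ⟨hai, hai1, hbi, hbi1⟩ := case3_facts hn hper hinv hba hb2
  have hzzi : z (z i) = i := hinv i
  have hzzi1 : z (z (i+1)) = i + 1 := hinv (i+1)
  apply icode_congr (Equiv.swap (z i) (z (i+1)))
  intro j
  have e2 : z' i = z (i+1) := by
    rw [hz'app, s_hi hn (show ((n:ℕ):ℤ) ∣ (i - i) by simp), s_other hn hbi hbi1]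
  rw [e2]
  by_cases hja : j = z i
  · have hσ : Equiv.swap (z i) (z (i+1)) j = z (i+1) := by
      rw [hja]; exact Equiv.swap_apply_left _ _
    have e3 : z' (z (i+1)) = i := by
      rw [hz'app, s_other hn hbi hbi1, hzzi1,
          s_lo hn (show ((n:ℕ):ℤ) ∣ (i + 1 - (i+1)) by simp)]
      ring
    rw [hσ, e3, hja, hzzi]
    omega
  · by_cases hjb : j = z (i+1)
    · have hσ : Equiv.swap (z i) (z (i+1)) j = z i := by
        rw [hjb]; exact Equiv.swap_apply_right _ _
      have e3 : z' (z i) = i + 1 := by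
        rw [hz'app, s_other hn hai hai1, hzzi,
            s_hi hn (show ((n:ℕ):ℤ) ∣ (i - i) by simp)]
      rw [hσ, e3, hjb, hzzi1]
      omega
    · have hσ : Equiv.swap (z i) (z (i+1)) j = j := Equiv.swap_apply_of_ne_of_ne hja hjb
      rw [hσ]
      by_cases hA : (n:ℤ) ∣ (z j - i)
      · have hj : j = z i + (z j - i) := trans_zi hper hinv hA
        have hji : ¬ (n:ℤ) ∣ (j - i) := by
          intro h
          have h2 := dvd_sub h hA
          rw [show (j - i) - (z j - i) = z i - i from by omega] at h2
          exact hai h2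
        have hji1 : ¬ (n:ℤ) ∣ (j - (i+1)) := by
          intro h
          have h2 := dvd_sub h hA
          rw [show (j - (i+1)) - (z j - i) = z i - (i+1) from by omega] at h2
          exact hai1 h2
        have ez : z' j = z j + 1 := by
          rw [hz'app, s_other hn hji hji1, s_hi hn hA]
        have htr := tri hn hA
        rw [ez]
        omega
      · by_cases hB : (n:ℤ) ∣ (z j - (i+1))
        · have hj : j = z (i+1) + (z j - (i+1)) := trans_zi1 hper hinv hB
          have hji : ¬ (n:ℤ) ∣ (j - i) := by
            intro h
            have h2 := dvd_sub h hB
            rw [show (j - i) - (z j - (i+1)) = z (i+1) - i from by omega] at h2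
            exact hbi h2
          have hji1 : ¬ (n:ℤ) ∣ (j - (i+1)) := by
            intro h
            have h2 := dvd_sub h hB
            rw [show (j - (i+1)) - (z j - (i+1)) = z (i+1) - (i+1) from by omega] at h2
            exact hbi1 h2
          have ez : z' j = z j - 1 := by
            rw [hz'app, s_other hn hji hji1, s_lo hn hB]
          have htr := tri hn hB
          rw [ez]
          omega
        · by_cases hC : (n:ℤ) ∣ (j - i)
          · have hzj : z j = z i + (j - i) := val_i hper hC
            have hz1 : z (j + 1) = z (i+1) + (j - i) := by
              have := val_i1 (i := i) hper (j := j + 1)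
                (show ((n:ℕ):ℤ) ∣ (j + 1 - (i+1)) from by
                  rw [show j + 1 - (i+1) = j - i from by ring]; exact hC)
              rw [this]; ring_nf
            have hzb : ¬ (n:ℤ) ∣ (z (j+1) - i) := by
              intro h
              apply hbi
              rw [show z (i+1) - i = (z (j+1) - i) - (j - i) from by omega]
              exact dvd_sub h hC
            have hzb1 : ¬ (n:ℤ) ∣ (z (j+1) - (i+1)) := by
              intro h
              apply hbi1
              rw [show z (i+1) - (i+1) = (z (j+1) - (i+1)) - (j - i) from by omega]
              exact dvd_sub h hC
            have ez : z' j = z (i+1) + (j - i) := by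
              rw [hz'app, s_hi hn hC, ← hz1, s_other hn hzb hzb1, hz1]
            rw [ez]
            omega
          · by_cases hD : (n:ℤ) ∣ (j - (i+1))
            · have hzj : z j = z (i+1) + (j - (i+1)) := val_i1 hper hD
              have hz1 : z (j - 1) = z i + (j - (i+1)) := by
                have := val_i (i := i) hper (j := j - 1)
                  (show ((n:ℕ):ℤ) ∣ (j - 1 - i) from by
                    rw [show j - 1 - i = j - (i+1) from by ring]; exact hD)
                rw [this]; ring_nf
              have hza : ¬ (n:ℤ) ∣ (z (j-1) - i) := by
                intro h
                apply hai
                rw [show z i - i = (z (j-1) - i) - (j - (i+1)) from by omega]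
                exact dvd_sub h hD
              have hza1 : ¬ (n:ℤ) ∣ (z (j-1) - (i+1)) := by
                intro h
                apply hai1
                rw [show z i - (i+1) = (z (j-1) - (i+1)) - (j - (i+1)) from by omega]
                exact dvd_sub h hD
              have ez : z' j = z i + (j - (i+1)) := by
                rw [hz'app, s_lo hn hD, ← hz1, s_other hn hza hza1, hz1]
              rw [ez]
              omega
            · have sj : affS n i j = j := s_other hn hC hD
              have ez : z' j = z j := by
                rw [hz'app, sj, s_other hn hA hB]
              have hne1 : z j ≠ i := fun h => hA (by rw [h]; simp)
              have hne2 : z j ≠ i + 1 := fun h => hB (by rw [h]; simp)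
              rw [ez]
              omega

lemma conj_case3_ki1 (hn : 2 ≤ n)
    (hper : ∀ x : ℤ, z (x + (n:ℤ)) = z x + (n:ℤ)) (hinv : ∀ x : ℤ, z (z x) = x)
    (hz'app : ∀ x : ℤ, z' x = affS n i (z (affS n i x)))
    (hba : z (i+1) < z i) (hb2 : i + 1 < z (i+1)) :
    icodeEntry z (i+1) = icodeEntry z' (i+1) := by
  obtain ⟨hai, hai1, hbi, hbi1⟩ := case3_facts hn hper hinv hba hb2
  have hzzi : z (z i) = i := hinv i
  have hzzi1 : z (z (i+1)) = i + 1 := hinv (i+1)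
  apply icode_congr (Equiv.swap (z i) (z (i+1)))
  intro j
  have e2 : z' (i+1) = z i := by
    rw [hz'app, s_lo hn (show ((n:ℕ):ℤ) ∣ (i + 1 - (i+1)) by simp),
        show i + 1 - 1 = i from by ring, s_other hn hai hai1]
  rw [e2]
  by_cases hja : j = z i
  · have hσ : Equiv.swap (z i) (z (i+1)) j = z (i+1) := by
      rw [hja]; exact Equiv.swap_apply_left _ _
    have e3 : z' (z (i+1)) = i := by
      rw [hz'app, s_other hn hbi hbi1, hzzi1,
          s_lo hn (show ((n:ℕ):ℤ) ∣ (i + 1 - (i+1)) by simp)]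
      ring
    rw [hσ, e3, hja, hzzi]
    omega
  · by_cases hjb : j = z (i+1)
    · have hσ : Equiv.swap (z i) (z (i+1)) j = z i := by
        rw [hjb]; exact Equiv.swap_apply_right _ _
      have e3 : z' (z i) = i + 1 := by
        rw [hz'app, s_other hn hai hai1, hzzi,
            s_hi hn (show ((n:ℕ):ℤ) ∣ (i - i) by simp)]
      rw [hσ, e3, hjb, hzzi1]
      omega
    · have hσ : Equiv.swap (z i) (z (i+1)) j = j := Equiv.swap_apply_of_ne_of_ne hja hjb
      rw [hσ]
      by_cases hA : (n:ℤ) ∣ (z j - i)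
      · have hj : j = z i + (z j - i) := trans_zi hper hinv hA
        have hji : ¬ (n:ℤ) ∣ (j - i) := by
          intro h
          have h2 := dvd_sub h hA
          rw [show (j - i) - (z j - i) = z i - i from by omega] at h2
          exact hai h2
        have hji1 : ¬ (n:ℤ) ∣ (j - (i+1)) := by
          intro h
          have h2 := dvd_sub h hA
          rw [show (j - (i+1)) - (z j - i) = z i - (i+1) from by omega] at h2
          exact hai1 h2
        have ez : z' j = z j + 1 := by
          rw [hz'app, s_other hn hji hji1, s_hi hn hA]
        have htr := tri hn hA
        rw [ez]
        omega
      · by_cases hB : (n:ℤ) ∣ (z j - (i+1))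
        · have hj : j = z (i+1) + (z j - (i+1)) := trans_zi1 hper hinv hB
          have hji : ¬ (n:ℤ) ∣ (j - i) := by
            intro h
            have h2 := dvd_sub h hB
            rw [show (j - i) - (z j - (i+1)) = z (i+1) - i from by omega] at h2
            exact hbi h2
          have hji1 : ¬ (n:ℤ) ∣ (j - (i+1)) := by
            intro h
            have h2 := dvd_sub h hB
            rw [show (j - (i+1)) - (z j - (i+1)) = z (i+1) - (i+1) from by omega] at h2
            exact hbi1 h2
          have ez : z' j = z j - 1 := by
            rw [hz'app, s_other hn hji hji1, s_lo hn hB]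
          have htr := tri hn hB
          rw [ez]
          omega
        · by_cases hC : (n:ℤ) ∣ (j - i)
          · have hzj : z j = z i + (j - i) := val_i hper hC
            have hz1 : z (j + 1) = z (i+1) + (j - i) := by
              have := val_i1 (i := i) hper (j := j + 1)
                (show ((n:ℕ):ℤ) ∣ (j + 1 - (i+1)) from by
                  rw [show j + 1 - (i+1) = j - i from by ring]; exact hC)
              rw [this]; ring_nf
            have hzb : ¬ (n:ℤ) ∣ (z (j+1) - i) := by
              intro h
              apply hbi
              rw [show z (i+1) - i = (z (j+1) - i) - (j - i) from by omega]
              exact dvd_sub h hC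
            have hzb1 : ¬ (n:ℤ) ∣ (z (j+1) - (i+1)) := by
              intro h
              apply hbi1
              rw [show z (i+1) - (i+1) = (z (j+1) - (i+1)) - (j - i) from by omega]
              exact dvd_sub h hC
            have ez : z' j = z (i+1) + (j - i) := by
              rw [hz'app, s_hi hn hC, ← hz1, s_other hn hzb hzb1, hz1]
            have htr := tri hn hC
            rw [ez]
            omega
          · by_cases hD : (n:ℤ) ∣ (j - (i+1))
            · have hzj : z j = z (i+1) + (j - (i+1)) := val_i1 hper hD
              have hz1 : z (j - 1) = z i + (j - (i+1)) := by
                have := val_i (i := i) hper (j := j - 1)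
                  (show ((n:ℕ):ℤ) ∣ (j - 1 - i) from by
                    rw [show j - 1 - i = j - (i+1) from by ring]; exact hD)
                rw [this]; ring_nf
              have hza : ¬ (n:ℤ) ∣ (z (j-1) - i) := by
                intro h
                apply hai
                rw [show z i - i = (z (j-1) - i) - (j - (i+1)) from by omega]
                exact dvd_sub h hD
              have hza1 : ¬ (n:ℤ) ∣ (z (j-1) - (i+1)) := by
                intro h
                apply hai1
                rw [show z i - (i+1) = (z (j-1) - (i+1)) - (j - (i+1)) from by omega]
                exact dvd_sub h hD
              have ez : z' j = z i + (j - (i+1)) := by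
                rw [hz'app, s_lo hn hD, ← hz1, s_other hn hza hza1, hz1]
              rw [ez]
              omega
            · have sj : affS n i j = j := s_other hn hC hD
              have ez : z' j = z j := by
                rw [hz'app, sj, s_other hn hA hB]
              have hne1 : z j ≠ i := fun h => hA (by rw [h]; simp)
              have hne2 : z j ≠ i + 1 := fun h => hB (by rw [h]; simp)
              rw [ez]
              omega

lemma conj_case3_kb (hn : 2 ≤ n)
    (hper : ∀ x : ℤ, z (x + (n:ℤ)) = z x + (n:ℤ)) (hinv : ∀ x : ℤ, z (z x) = x)
    (hz'app : ∀ x : ℤ, z' x = affS n i (z (affS n i x)))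
    (hba : z (i+1) < z i) (hb2 : i + 1 < z (i+1)) :
    icodeEntry z (z (i+1)) = icodeEntry z' (z (i+1)) + 1 := by
  obtain ⟨hai, hai1, hbi, hbi1⟩ := case3_facts hn hper hinv hba hb2
  have hzzi : z (z i) = i := hinv i
  have hzzi1 : z (z (i+1)) = i + 1 := hinv (i+1)
  apply icode_succ hn (affS n i) hper hinv (p := z i) ⟨by omega, by omega, by omega⟩
  intro j
  have e1 : z' (affS n i j) = affS n i (z j) := by rw [hz'app, s_invol hn]
  have e2 : z' (z (i+1)) = i := by
    rw [hz'app, s_other hn hbi hbi1, hzzi1,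
        s_lo hn (show ((n:ℕ):ℤ) ∣ (i + 1 - (i+1)) by simp)]
    ring
  have c1 : z (i+1) < affS n i j ↔ z (i+1) < j := lt_s_iff hn hbi hbi1
  rw [e1, e2]
  by_cases hA : (n:ℤ) ∣ (z j - i)
  · have sv : affS n i (z j) = z j + 1 := s_hi hn hA
    have hj : j = z i + (z j - i) := trans_zi hper hinv hA
    have htr := tri hn hA
    rw [sv]
    omega
  · by_cases hB : (n:ℤ) ∣ (z j - (i+1))
    · have sv : affS n i (z j) = z j - 1 := s_lo hn hB
      have hj : j = z (i+1) + (z j - (i+1)) := trans_zi1 hper hinv hB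
      have htr := tri hn hB
      rw [sv]
      omega
    · have sv : affS n i (z j) = z j := s_other hn hA hB
      have hne1 : z j ≠ i := fun h => hA (by rw [h]; simp)
      have hne2 : z j ≠ i + 1 := fun h => hB (by rw [h]; simp)
      have hne3 : j ≠ z i := by
        intro h
        apply hA
        rw [h, hzzi]
        simp
      rw [sv]
      omega

end Case3

end ICodeAux
namespace ICodeAux

section Vis

variable {n : ℕ} {z z' : Equiv.Perm ℤ} {i : ℤ}

lemma conj_vis_A (hn : 2 ≤ n)
    (hper : ∀ x : ℤ, z (x + (n:ℤ)) = z x + (n:ℤ)) (hinv : ∀ x : ℤ, z (z x) = x)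
    (hz'app : ∀ x : ℤ, z' x = affS n i (z (affS n i x)))
    (hba : z (i+1) < z i) (hna1 : z i ≠ i + 1) (hvis : z (i+1) ≤ i) :
    icodeEntry z (i+1) = icodeEntry z' i := by
  have hzzi1 : z (z (i+1)) = i + 1 := hinv (i+1)
  have hbi1 : ¬ (n:ℤ) ∣ (z (i+1) - (i+1)) := fun h => by
    have := Fb_i1 hper hinv h; omega
  have hbne : z (i+1) ≠ i := fun h => hna1 (by
    have := Fb_i hper hinv (by rw [h]; simp); omega)
  have hblti : z (i+1) < i := by omega
  apply icode_congr (affS n i)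
  intro j
  have e1 : z' (affS n i j) = affS n i (z j) := by rw [hz'app, s_invol hn]
  have e2 : z' i = affS n i (z (i+1)) := by
    rw [hz'app, s_hi hn (show ((n:ℕ):ℤ) ∣ (i - i) by simp)]
  rw [e1, e2]
  by_cases hbi : (n:ℤ) ∣ (z (i+1) - i)
  -- subcase (ii): z(i+1) ≡ i, z i ≡ i+1
  · have hFb : z i = 2*i + 1 - z (i+1) := Fb_i hper hinv hbi
    have hai1 : (n:ℤ) ∣ (z i - (i+1)) := by
      rw [show z i - (i+1) = -(z (i+1) - i) from by omega]
      exact dvd_neg.mpr hbi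
    have e3 : affS n i (z (i+1)) = z (i+1) + 1 := s_hi hn hbi
    have htrb := tri hn hbi
    rw [e3]
    by_cases hA : (n:ℤ) ∣ (z j - i)
    · have hj : j = z i + (z j - i) := trans_zi hper hinv hA
      have sj : affS n i j = j - 1 := s_lo hn (by
        rw [show j - (i+1) = (z i - (i+1)) + (z j - i) from by omega]
        exact dvd_add hai1 hA)
      have sv : affS n i (z j) = z j + 1 := s_hi hn hA
      rw [sj, sv]
      omega
    · by_cases hB : (n:ℤ) ∣ (z j - (i+1))
      · have hj : j = z (i+1) + (z j - (i+1)) := trans_zi1 hper hinv hB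
        have sj : affS n i j = j + 1 := s_hi hn (by
          rw [show j - i = (z (i+1) - i) + (z j - (i+1)) from by omega]
          exact dvd_add hbi hB)
        have sv : affS n i (z j) = z j - 1 := s_lo hn hB
        rw [sj, sv]
        omega
      · by_cases hC : (n:ℤ) ∣ (j - i)
        · exfalso
          apply hB
          have hzj : z j = z i + (j - i) := val_i hper hC
          rw [show z j - (i+1) = (z i - (i+1)) + (j - i) from by omega]
          exact dvd_add hai1 hC
        · by_cases hD : (n:ℤ) ∣ (j - (i+1))
          · exfalso
            apply hA
            have hzj : z j = z (i+1) + (j - (i+1)) := val_i1 hper hD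
            rw [show z j - i = (z (i+1) - i) + (j - (i+1)) from by omega]
            exact dvd_add hbi hD
          · have sj : affS n i j = j := s_other hn hC hD
            have sv : affS n i (z j) = z j := s_other hn hA hB
            have hne3 : z j ≠ z (i+1) := by
              intro h
              apply hD
              have : j = i + 1 := by rw [← hinv j, h]; exact hzzi1
              rw [this]; simp
            have hne4 : j ≠ i + 1 := fun h => hD (by rw [h]; simp)
            rw [sj, sv]
            omega
  -- z(i+1) generic
  · have hai1 : ¬ (n:ℤ) ∣ (z i - (i+1)) := by
      intro h
      apply hbi
      have hF := Fa_i1 hper hinv h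
      rw [show z (i+1) - i = -(z i - (i+1)) from by omega]
      exact dvd_neg.mpr h
    have e3 : affS n i (z (i+1)) = z (i+1) := s_other hn hbi hbi1
    rw [e3]
    by_cases hai : (n:ℤ) ∣ (z i - i)
    -- subcase (i): z i = i
    · have haeq : z i = i := Fa_i hper hinv hai
      by_cases hA : (n:ℤ) ∣ (z j - i)
      · have hj : j = z i + (z j - i) := trans_zi hper hinv hA
        have sj : affS n i j = j + 1 := s_hi hn (by
          rw [show j - i = (z i - i) + (z j - i) from by omega]
          exact dvd_add hai hA)
        have sv : affS n i (z j) = z j + 1 := s_hi hn hA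
        rw [sj, sv]
        omega
      · by_cases hB : (n:ℤ) ∣ (z j - (i+1))
        · have hj : j = z (i+1) + (z j - (i+1)) := trans_zi1 hper hinv hB
          have hji : ¬ (n:ℤ) ∣ (j - i) := by
            intro h
            apply hbi
            rw [show z (i+1) - i = (j - i) - (z j - (i+1)) from by omega]
            exact dvd_sub h hB
          have hji1 : ¬ (n:ℤ) ∣ (j - (i+1)) := by
            intro h
            apply hbi1
            rw [show z (i+1) - (i+1) = (j - (i+1)) - (z j - (i+1)) from by omega]
            exact dvd_sub h hB
          have sj : affS n i j = j := s_other hn hji hji1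
          have sv : affS n i (z j) = z j - 1 := s_lo hn hB
          rw [sj, sv]
          omega
        · by_cases hC : (n:ℤ) ∣ (j - i)
          · exfalso
            apply hA
            have hzj : z j = z i + (j - i) := val_i hper hC
            rw [show z j - i = (z i - i) + (j - i) from by omega]
            exact dvd_add hai hC
          · by_cases hD : (n:ℤ) ∣ (j - (i+1))
            · have hzj : z j = z (i+1) + (j - (i+1)) := val_i1 hper hD
              have sj : affS n i j = j - 1 := s_lo hn hD
              have sv : affS n i (z j) = z j := s_other hn hA hB
              rw [sj, sv]
              omega
            · have sj : affS n i j = j := s_other hn hC hD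
              have sv : affS n i (z j) = z j := s_other hn hA hB
              have hne3 : z j ≠ z (i+1) := by
                intro h
                apply hD
                have : j = i + 1 := by rw [← hinv j, h]; exact hzzi1
                rw [this]; simp
              have hne4 : j ≠ i + 1 := fun h => hD (by rw [h]; simp)
              rw [sj, sv]
              omega
    -- subcase (iii): generic a and b
    · by_cases hA : (n:ℤ) ∣ (z j - i)
      · have hj : j = z i + (z j - i) := trans_zi hper hinv hA
        have hji : ¬ (n:ℤ) ∣ (j - i) := by
          intro h
          apply hai
          rw [show z i - i = (j - i) - (z j - i) from by omega]
          exact dvd_sub h hA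
        have hji1 : ¬ (n:ℤ) ∣ (j - (i+1)) := by
          intro h
          apply hai1
          rw [show z i - (i+1) = (j - (i+1)) - (z j - i) from by omega]
          exact dvd_sub h hA
        have sj : affS n i j = j := s_other hn hji hji1
        have sv : affS n i (z j) = z j + 1 := s_hi hn hA
        have hne1 : z j + 1 ≠ z (i+1) := fun h => hbi1 (by
          rw [show z (i+1) - (i+1) = z j - i from by omega]
          exact hA)
        have hne2 : z j ≠ z (i+1) := fun h => hbi (by
          rw [show z (i+1) - i = z j - i from by omega]
          exact hA)
        have hne3 : j ≠ i + 1 := fun h => hji1 (by rw [h]; simp)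
        have htr := tri hn hA
        rw [sj, sv]
        omega
      · by_cases hB : (n:ℤ) ∣ (z j - (i+1))
        · have hj : j = z (i+1) + (z j - (i+1)) := trans_zi1 hper hinv hB
          have hji : ¬ (n:ℤ) ∣ (j - i) := by
            intro h
            apply hbi
            rw [show z (i+1) - i = (j - i) - (z j - (i+1)) from by omega]
            exact dvd_sub h hB
          have hji1 : ¬ (n:ℤ) ∣ (j - (i+1)) := by
            intro h
            apply hbi1
            rw [show z (i+1) - (i+1) = (j - (i+1)) - (z j - (i+1)) from by omega]
            exact dvd_sub h hB
          have sj : affS n i j = j := s_other hn hji hji1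
          have sv : affS n i (z j) = z j - 1 := s_lo hn hB
          have htr := tri hn hB
          rw [sj, sv]
          omega
        · by_cases hC : (n:ℤ) ∣ (j - i)
          · have hzj : z j = z i + (j - i) := val_i hper hC
            have sj : affS n i j = j + 1 := s_hi hn hC
            have sv : affS n i (z j) = z j := s_other hn hA hB
            have hne4 : z i + (j - i) ≠ i + 1 := by
              intro h
              apply hai1
              rw [show z i - (i+1) = -(j - i) from by omega]
              exact dvd_neg.mpr hC
            have htr := tri hn hC
            rw [sj, sv]
            omega
          · by_cases hD : (n:ℤ) ∣ (j - (i+1))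
            · have hzj : z j = z (i+1) + (j - (i+1)) := val_i1 hper hD
              have sj : affS n i j = j - 1 := s_lo hn hD
              have sv : affS n i (z j) = z j := s_other hn hA hB
              rw [sj, sv]
              omega
            · have sj : affS n i j = j := s_other hn hC hD
              have sv : affS n i (z j) = z j := s_other hn hA hB
              have hne3 : z j ≠ z (i+1) := by
                intro h
                apply hD
                have : j = i + 1 := by rw [← hinv j, h]; exact hzzi1
                rw [this]; simp
              have hne4 : j ≠ i + 1 := fun h => hD (by rw [h]; simp)
              rw [sj, sv]
              omega

end Vis

end ICodeAux
namespace ICodeAux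

section VisB

variable {n : ℕ} {z z' : Equiv.Perm ℤ} {i : ℤ}

lemma conj_vis_B (hn : 2 ≤ n)
    (hper : ∀ x : ℤ, z (x + (n:ℤ)) = z x + (n:ℤ)) (hinv : ∀ x : ℤ, z (z x) = x)
    (hz'app : ∀ x : ℤ, z' x = affS n i (z (affS n i x)))
    (hba : z (i+1) < z i) (hna1 : z i ≠ i + 1) (hvis : z (i+1) ≤ i) :
    icodeEntry z i = icodeEntry z' (i+1) + 1 := by
  have hzzi : z (z i) = i := hinv i
  have hzzi1 : z (z (i+1)) = i + 1 := hinv (i+1)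
  have hbi1 : ¬ (n:ℤ) ∣ (z (i+1) - (i+1)) := fun h => by
    have := Fb_i1 hper hinv h; omega
  have hbne : z (i+1) ≠ i := fun h => hna1 (by
    have := Fb_i hper hinv (by rw [h]; simp); omega)
  have hblti : z (i+1) < i := by omega
  apply icode_succ hn (affS n i) hper hinv (p := i+1) ⟨by omega, hba, hvis⟩
  intro j
  have e1 : z' (affS n i j) = affS n i (z j) := by rw [hz'app, s_invol hn]
  have e2 : z' (i+1) = affS n i (z i) := by
    rw [hz'app, s_lo hn (show ((n:ℕ):ℤ) ∣ (i + 1 - (i+1)) by simp),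
        show i + 1 - 1 = i from by ring]
  rw [e1, e2]
  by_cases hai1 : (n:ℤ) ∣ (z i - (i+1))
  -- branch A2 : z i ≡ i+1, z (i+1) ≡ i
  · have hFa : z (i+1) = 2*i + 1 - z i := Fa_i1 hper hinv hai1
    have hbi : (n:ℤ) ∣ (z (i+1) - i) := by
      rw [show z (i+1) - i = -(z i - (i+1)) from by omega]
      exact dvd_neg.mpr hai1
    have e3 : affS n i (z i) = z i - 1 := s_lo hn hai1
    have htra := tri hn hai1
    rw [e3]
    by_cases hA : (n:ℤ) ∣ (z j - i)
    · have hj : j = z i + (z j - i) := trans_zi hper hinv hA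
      have sj : affS n i j = j - 1 := s_lo hn (by
        rw [show j - (i+1) = (z i - (i+1)) + (z j - i) from by omega]
        exact dvd_add hai1 hA)
      have sv : affS n i (z j) = z j + 1 := s_hi hn hA
      have htr := tri hn hA
      have hne5 : (z j - i) + (z i - (i+1)) ≠ 1 :=
        fun h => one_not_dvd hn (h ▸ dvd_add hA hai1)
      rw [sj, sv]
      omega
    · by_cases hB : (n:ℤ) ∣ (z j - (i+1))
      · have hj : j = z (i+1) + (z j - (i+1)) := trans_zi1 hper hinv hB
        have sj : affS n i j = j + 1 := s_hi hn (by
          rw [show j - i = (z (i+1) - i) + (z j - (i+1)) from by omega]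
          exact dvd_add hbi hB)
        have sv : affS n i (z j) = z j - 1 := s_lo hn hB
        have htr := tri hn hB
        have hne6 : (z (i+1) - i) - (z j - (i+1)) ≠ 1 :=
          fun h => one_not_dvd hn (h ▸ dvd_sub hbi hB)
        rw [sj, sv]
        omega
      · by_cases hC : (n:ℤ) ∣ (j - i)
        · exfalso
          apply hB
          have hzj : z j = z i + (j - i) := val_i hper hC
          rw [show z j - (i+1) = (z i - (i+1)) + (j - i) from by omega]
          exact dvd_add hai1 hC
        · by_cases hD : (n:ℤ) ∣ (j - (i+1))
          · exfalso
            apply hA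
            have hzj : z j = z (i+1) + (j - (i+1)) := val_i1 hper hD
            rw [show z j - i = (z (i+1) - i) + (j - (i+1)) from by omega]
            exact dvd_add hbi hD
          · have sj : affS n i j = j := s_other hn hC hD
            have sv : affS n i (z j) = z j := s_other hn hA hB
            have hne4 : j ≠ i + 1 := fun h => hD (by rw [h]; simp)
            have hne7 : z j ≠ z i - 1 := fun h => hA (by
              rw [show z j - i = z i - (i+1) from by omega]
              exact hai1)
            have hne1 : z j ≠ i := fun h => hA (by rw [h]; simp)
            have hne2 : z j ≠ i + 1 := fun h => hB (by rw [h]; simp)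
            rw [sj, sv]
            omega
  · by_cases hai : (n:ℤ) ∣ (z i - i)
    -- branch A1 : z i = i
    · have haeq : z i = i := Fa_i hper hinv hai
      have hbi : ¬ (n:ℤ) ∣ (z (i+1) - i) := fun h => by
        have := Fb_i hper hinv h; omega
      have e3 : affS n i (z i) = z i + 1 := s_hi hn hai
      rw [e3]
      by_cases hA : (n:ℤ) ∣ (z j - i)
      · have hj : j = z i + (z j - i) := trans_zi hper hinv hA
        have sj : affS n i j = j + 1 := s_hi hn (by
          rw [show j - i = (z i - i) + (z j - i) from by omega]
          exact dvd_add hai hA)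
        have sv : affS n i (z j) = z j + 1 := s_hi hn hA
        rw [sj, sv]
        omega
      · by_cases hB : (n:ℤ) ∣ (z j - (i+1))
        · have hj : j = z (i+1) + (z j - (i+1)) := trans_zi1 hper hinv hB
          have hji : ¬ (n:ℤ) ∣ (j - i) := by
            intro h
            apply hbi
            rw [show z (i+1) - i = (j - i) - (z j - (i+1)) from by omega]
            exact dvd_sub h hB
          have hji1 : ¬ (n:ℤ) ∣ (j - (i+1)) := by
            intro h
            apply hbi1
            rw [show z (i+1) - (i+1) = (j - (i+1)) - (z j - (i+1)) from by omega]
            exact dvd_sub h hB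
          have sj : affS n i j = j := s_other hn hji hji1
          have sv : affS n i (z j) = z j - 1 := s_lo hn hB
          have htr := tri hn hB
          rw [sj, sv]
          omega
        · by_cases hC : (n:ℤ) ∣ (j - i)
          · exfalso
            apply hA
            have hzj : z j = z i + (j - i) := val_i hper hC
            rw [show z j - i = (z i - i) + (j - i) from by omega]
            exact dvd_add hai hC
          · by_cases hD : (n:ℤ) ∣ (j - (i+1))
            · have hzj : z j = z (i+1) + (j - (i+1)) := val_i1 hper hD
              have sj : affS n i j = j - 1 := s_lo hn hD
              have sv : affS n i (z j) = z j := s_other hn hA hB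
              have hne : z (i+1) + (j - (i+1)) ≠ i := by
                intro h
                apply hbi
                rw [show z (i+1) - i = -(j - (i+1)) from by omega]
                exact dvd_neg.mpr hD
              have htr := tri hn hD
              rw [sj, sv]
              omega
            · have sj : affS n i j = j := s_other hn hC hD
              have sv : affS n i (z j) = z j := s_other hn hA hB
              have hne4 : j ≠ i + 1 := fun h => hD (by rw [h]; simp)
              have hne1 : z j ≠ i := fun h => hA (by rw [h]; simp)
              have hne2 : z j ≠ i + 1 := fun h => hB (by rw [h]; simp)
              rw [sj, sv]
              omega
    -- branch A3 : generic
    · have hbi : ¬ (n:ℤ) ∣ (z (i+1) - i) := by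
        intro h
        apply hai1
        have := Fb_i hper hinv h
        rw [show z i - (i+1) = -(z (i+1) - i) from by omega]
        exact dvd_neg.mpr h
      have e3 : affS n i (z i) = z i := s_other hn hai hai1
      rw [e3]
      by_cases hA : (n:ℤ) ∣ (z j - i)
      · have hj : j = z i + (z j - i) := trans_zi hper hinv hA
        have hji : ¬ (n:ℤ) ∣ (j - i) := by
          intro h
          apply hai
          rw [show z i - i = (j - i) - (z j - i) from by omega]
          exact dvd_sub h hA
        have hji1 : ¬ (n:ℤ) ∣ (j - (i+1)) := by
          intro h
          apply hai1
          rw [show z i - (i+1) = (j - (i+1)) - (z j - i) from by omega]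
          exact dvd_sub h hA
        have sj : affS n i j = j := s_other hn hji hji1
        have sv : affS n i (z j) = z j + 1 := s_hi hn hA
        have hne3 : j ≠ i + 1 := fun h => hji1 (by rw [h]; simp)
        have hne8 : z i ≠ z j + 1 := fun h => hai1 (by
          rw [show z i - (i+1) = z j - i from by omega]
          exact hA)
        rw [sj, sv]
        omega
      · by_cases hB : (n:ℤ) ∣ (z j - (i+1))
        · have hj : j = z (i+1) + (z j - (i+1)) := trans_zi1 hper hinv hB
          have hji : ¬ (n:ℤ) ∣ (j - i) := by
            intro h
            apply hbi
            rw [show z (i+1) - i = (j - i) - (z j - (i+1)) from by omega]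
            exact dvd_sub h hB
          have hji1 : ¬ (n:ℤ) ∣ (j - (i+1)) := by
            intro h
            apply hbi1
            rw [show z (i+1) - (i+1) = (j - (i+1)) - (z j - (i+1)) from by omega]
            exact dvd_sub h hB
          have sj : affS n i j = j := s_other hn hji hji1
          have sv : affS n i (z j) = z j - 1 := s_lo hn hB
          have htr := tri hn hB
          rw [sj, sv]
          omega
        · by_cases hC : (n:ℤ) ∣ (j - i)
          · have hzj : z j = z i + (j - i) := val_i hper hC
            have sj : affS n i j = j + 1 := s_hi hn hC
            have sv : affS n i (z j) = z j := s_other hn hA hB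
            have htr := tri hn hC
            rw [sj, sv]
            omega
          · by_cases hD : (n:ℤ) ∣ (j - (i+1))
            · have hzj : z j = z (i+1) + (j - (i+1)) := val_i1 hper hD
              have sj : affS n i j = j - 1 := s_lo hn hD
              have sv : affS n i (z j) = z j := s_other hn hA hB
              have hne10 : z (i+1) + (j - (i+1)) ≠ i + 1 := by
                intro h
                apply hbi1
                rw [show z (i+1) - (i+1) = -(j - (i+1)) from by omega]
                exact dvd_neg.mpr hD
              have htr := tri hn hD
              rw [sj, sv]
              omega
            · have sj : affS n i j = j := s_other hn hC hD
              have sv : affS n i (z j) = z j := s_other hn hA hB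
              have hne4 : j ≠ i + 1 := fun h => hD (by rw [h]; simp)
              have hne1 : z j ≠ i := fun h => hA (by rw [h]; simp)
              have hne2 : z j ≠ i + 1 := fun h => hB (by rw [h]; simp)
              by_cases hx : j = i
              · rw [sj, sv]
                omega
              · rw [sj, sv]
                omega

end VisB

end ICodeAux
namespace ICodeAux

section Com

variable {n : ℕ} {z z' : Equiv.Perm ℤ} {i : ℤ}

lemma com_facts (hn : 2 ≤ n)
    (hper : ∀ x : ℤ, z (x + (n:ℤ)) = z x + (n:ℤ)) (hinv : ∀ x : ℤ, z (z x) = x)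
    (hdes : z (i+1) < z i) (hcom : z * affS n i = affS n i * z) :
    z i = i + 1 ∧ z (i+1) = i := by
  have hA : z (affS n i i) = affS n i (z i) := by
    have h := congr_arg (fun σ : Equiv.Perm ℤ => σ i) hcom
    simpa [Equiv.Perm.mul_apply] using h
  rw [s_hi hn (show ((n:ℕ):ℤ) ∣ (i - i) by simp)] at hA
  by_cases h1 : (n:ℤ) ∣ (z i - i)
  · rw [s_hi hn h1] at hA
    omega
  · by_cases h2 : (n:ℤ) ∣ (z i - (i+1))
    · rw [s_lo hn h2] at hA
      have hF := Fa_i1 hper hinv h2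
      omega
    · rw [s_other hn h1 h2] at hA
      omega

lemma commute_of (hn : 2 ≤ n)
    (hper : ∀ x : ℤ, z (x + (n:ℤ)) = z x + (n:ℤ)) (hinv : ∀ x : ℤ, z (z x) = x)
    (hzi : z i = i + 1) (hzi1 : z (i+1) = i) :
    z * affS n i = affS n i * z := by
  apply Equiv.ext
  intro x
  simp only [Equiv.Perm.mul_apply]
  by_cases hC : (n:ℤ) ∣ (x - i)
  · rw [s_hi hn hC]
    have e1 : z (x + 1) = z (i+1) + (x - i) := by
      have := val_i1 (i := i) hper (j := x + 1)
        (show ((n:ℕ):ℤ) ∣ (x + 1 - (i+1)) from by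
          rw [show x + 1 - (i+1) = x - i from by ring]; exact hC)
      rw [this]; ring_nf
    have e2 : z x = z i + (x - i) := val_i hper hC
    rw [e1, e2, hzi, hzi1, s_lo hn (by
      rw [show i + 1 + (x - i) - (i+1) = x - i from by ring]; exact hC)]
    ring
  · by_cases hD : (n:ℤ) ∣ (x - (i+1))
    · rw [s_lo hn hD]
      have e1 : z (x - 1) = z i + (x - (i+1)) := by
        have := val_i (i := i) hper (j := x - 1)
          (show ((n:ℕ):ℤ) ∣ (x - 1 - i) from by
            rw [show x - 1 - i = x - (i+1) from by ring]; exact hD)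
        rw [this]; ring_nf
      have e2 : z x = z (i+1) + (x - (i+1)) := val_i1 hper hD
      rw [e1, e2, hzi, hzi1, s_hi hn (by
        rw [show i + (x - (i+1)) - i = x - (i+1) from by ring]; exact hD)]
      ring
    · rw [s_other hn hC hD]
      have hzx1 : ¬ (n:ℤ) ∣ (z x - i) := by
        intro h
        apply hD
        have hj := trans_zi hper hinv h
        rw [show x - (i+1) = (z x - i) + (z i - (i+1)) from by omega, hzi]
        simpa using h
      have hzx2 : ¬ (n:ℤ) ∣ (z x - (i+1)) := by
        intro h
        apply hC
        have hj := trans_zi1 hper hinv h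
        rw [show x - i = (z x - (i+1)) + (z (i+1) - i) from by omega, hzi1]
        simpa using h
      rw [s_other hn hzx1 hzx2]

lemma com_A (hn : 2 ≤ n)
    (hper : ∀ x : ℤ, z (x + (n:ℤ)) = z x + (n:ℤ)) (hinv : ∀ x : ℤ, z (z x) = x)
    (hz'com : ∀ x : ℤ, z' x = z (affS n i x))
    (hzi : z i = i + 1) (hzi1 : z (i+1) = i) :
    icodeEntry z (i+1) = icodeEntry z' i := by
  apply icode_congr 1
  intro j
  have hone : (1 : Equiv.Perm ℤ) j = j := rfl
  have e2 : z' i = i := by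
    rw [hz'com, s_hi hn (show ((n:ℕ):ℤ) ∣ (i - i) by simp), hzi1]
  rw [hone, e2, hzi1]
  by_cases hC : (n:ℤ) ∣ (j - i)
  · have hzj : z j = z i + (j - i) := val_i hper hC
    have ez : z' j = j := by
      rw [hz'com, s_hi hn hC]
      have := val_i1 (i := i) hper (j := j + 1)
        (show ((n:ℕ):ℤ) ∣ (j + 1 - (i+1)) from by
          rw [show j + 1 - (i+1) = j - i from by ring]; exact hC)
      rw [this, hzi1]; ring
    rw [ez]
    omega
  · by_cases hD : (n:ℤ) ∣ (j - (i+1))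
    · have hzj : z j = z (i+1) + (j - (i+1)) := val_i1 hper hD
      have ez : z' j = j := by
        rw [hz'com, s_lo hn hD]
        have := val_i (i := i) hper (j := j - 1)
          (show ((n:ℕ):ℤ) ∣ (j - 1 - i) from by
            rw [show j - 1 - i = j - (i+1) from by ring]; exact hD)
        rw [this, hzi]; ring
      rw [ez]
      omega
    · have ez : z' j = z j := by rw [hz'com, s_other hn hC hD]
      have hne1 : z j ≠ i := by
        intro h
        apply hD
        have : j = i + 1 := by
          rw [← hinv j, h]; exact hzi
        rw [this]; simp
      have hne2 : j ≠ i + 1 := fun h => hD (by rw [h]; simp)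
      rw [ez]
      omega

lemma com_B (hn : 2 ≤ n)
    (hper : ∀ x : ℤ, z (x + (n:ℤ)) = z x + (n:ℤ)) (hinv : ∀ x : ℤ, z (z x) = x)
    (hz'com : ∀ x : ℤ, z' x = z (affS n i x))
    (hzi : z i = i + 1) (hzi1 : z (i+1) = i) :
    icodeEntry z i = icodeEntry z' (i+1) + 1 := by
  apply icode_succ hn (1 : Equiv.Perm ℤ) hper hinv (p := i+1) ⟨by omega, by omega, by omega⟩
  intro j
  have hone : (1 : Equiv.Perm ℤ) j = j := rfl
  have e2 : z' (i+1) = i + 1 := by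
    rw [hz'com, s_lo hn (show ((n:ℕ):ℤ) ∣ (i + 1 - (i+1)) by simp),
        show i + 1 - 1 = i from by ring, hzi]
  rw [hone, e2, hzi]
  by_cases hC : (n:ℤ) ∣ (j - i)
  · have hzj : z j = z i + (j - i) := val_i hper hC
    have ez : z' j = j := by
      rw [hz'com, s_hi hn hC]
      have := val_i1 (i := i) hper (j := j + 1)
        (show ((n:ℕ):ℤ) ∣ (j + 1 - (i+1)) from by
          rw [show j + 1 - (i+1) = j - i from by ring]; exact hC)
      rw [this, hzi1]; ring
    have htr := tri hn hC
    rw [ez]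
    omega
  · by_cases hD : (n:ℤ) ∣ (j - (i+1))
    · have hzj : z j = z (i+1) + (j - (i+1)) := val_i1 hper hD
      have ez : z' j = j := by
        rw [hz'com, s_lo hn hD]
        have := val_i (i := i) hper (j := j - 1)
          (show ((n:ℕ):ℤ) ∣ (j - 1 - i) from by
            rw [show j - 1 - i = j - (i+1) from by ring]; exact hD)
        rw [this, hzi]; ring
      have htr := tri hn hD
      rw [ez]
      omega
    · have ez : z' j = z j := by rw [hz'com, s_other hn hC hD]
      have hne1 : z j ≠ i := by
        intro h
        apply hD
        have : j = i + 1 := by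
          rw [← hinv j, h]; exact hzi
        rw [this]; simp
      have hne2 : z j ≠ i + 1 := by
        intro h
        apply hC
        have : j = i := by
          rw [← hinv j, h]; exact hzi1
        rw [this]; simp
      have hne3 : j ≠ i + 1 := fun h => hD (by rw [h]; simp)
      rw [ez]
      omega

lemma com_C (hn : 2 ≤ n)
    (hper : ∀ x : ℤ, z (x + (n:ℤ)) = z x + (n:ℤ)) (hinv : ∀ x : ℤ, z (z x) = x)
    (hz'com : ∀ x : ℤ, z' x = z (affS n i x)) {k : ℤ}
    (hk1 : ¬ (n:ℤ) ∣ (k - i)) (hk2 : ¬ (n:ℤ) ∣ (k - (i+1))) :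
    icodeEntry z k = icodeEntry z' k := by
  apply icode_congr (affS n i)
  intro j
  have e1 : z' (affS n i j) = z j := by rw [hz'com, s_invol hn]
  have e2 : z' k = z k := by rw [hz'com, s_other hn hk1 hk2]
  rw [e1, e2, lt_s_iff hn hk1 hk2]

end Com

end ICodeAux

open ICodeAux

/-- the effect on the involution code of passing from `z` to
`z_{↓(i)}` when `z(i) > z(i+1)`. -/
theorem icode_of_demazure_descent (n : ℕ) (hn : 0 < n)
    (z z' : Equiv.Perm ℤ) (hz : IsAffine n z) (hzi : z⁻¹ = z)
    (i : ℤ) (hi1 : 1 ≤ i) (hi2 : i ≤ n) (hdes : z (i + 1) < z i)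
    (hz' : (z * affS n i = affS n i * z ∧ z' = z * affS n i) ∨
           (z * affS n i ≠ affS n i * z ∧ z' = affS n i * z * affS n i)) :
    (z (i + 1) ≤ i →
        icodeEntry z' i = icodeEntry z (if i = (n : ℤ) then 1 else i + 1) ∧
        icodeEntry z' (if i = (n : ℤ) then 1 else i + 1) = icodeEntry z i - 1 ∧
        ∀ k : ℤ, 1 ≤ k → k ≤ n → k ≠ i → k ≠ (if i = (n : ℤ) then 1 else i + 1) →
          icodeEntry z' k = icodeEntry z k) ∧
    (i < z (i + 1) → z (i + 1) = i + 1 →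
      icodeEntry z' i = icodeEntry z i - 1 ∧
      ∀ k : ℤ, 1 ≤ k → k ≤ n → k ≠ i → icodeEntry z' k = icodeEntry z k) ∧
    (i < z (i + 1) → z (i + 1) ≠ i + 1 →
      ∀ j : ℤ, 1 ≤ j → j ≤ n → j ≠ i → (z (i + 1) - j) % (n : ℤ) = 0 →
        icodeEntry z' j = icodeEntry z j - 1 ∧
        ∀ k : ℤ, 1 ≤ k → k ≤ n → k ≠ j → icodeEntry z' k = icodeEntry z k) := by
  have hper : ∀ x : ℤ, z (x + (n:ℤ)) = z x + (n:ℤ) := hz.1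
  have hinv : ∀ x : ℤ, z (z x) = x := fun x => by
    nth_rewrite 1 [← hzi]
    exact Equiv.symm_apply_apply z x
  rcases Nat.lt_or_ge n 2 with h2case | hn2
  · -- n = 1 : impossible
    exfalso
    have hn1 : n = 1 := by omega
    subst hn1
    have hz1 : z 1 = 1 := by
      have h := hz.2
      norm_num [Finset.Icc_self] at h
      exact h
    have hzx : ∀ x : ℤ, z x = x := by
      intro x
      have := fper (n := 1) hper (x := (1:ℤ)) (y := x) (by simp)
      omega
    have h1 := hzx (i+1)
    have h2 := hzx i
    omega
  -- main case : n ≥ 2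
  set ip : ℤ := if i = (n:ℤ) then 1 else i + 1 with hip
  have hiplb : 1 ≤ ip := by
    rw [hip]; split_ifs with h <;> omega
  have hipub : ip ≤ (n:ℤ) := by
    rw [hip]; split_ifs with h
    · omega
    · omega
  have hipd : (n:ℤ) ∣ (ip - (i+1)) := by
    rw [hip]; split_ifs with h
    · exact ⟨-1, by rw [h]; ring⟩
    · exact ⟨0, by ring⟩
  have hshz : icodeEntry z ip = icodeEntry z (i+1) := by
    have := icode_shift z hper hipd (i+1)
    rw [show (i+1) + (ip - (i+1)) = ip from by ring] at this
    exact this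
  rcases hz' with ⟨hcom, hz'def⟩ | ⟨hncom, hz'def⟩
  · -- commuting case
    obtain ⟨hziv, hzi1v⟩ := com_facts hn2 hper hinv hdes hcom
    have hz'com : ∀ x : ℤ, z' x = z (affS n i x) := fun x => by rw [hz'def]; rfl
    have z'per : ∀ x : ℤ, z' (x + (n:ℤ)) = z' x + (n:ℤ) := fun x => by
      rw [hz'com, hz'com, s_per hn2, hper]
    have hshz' : icodeEntry z' ip = icodeEntry z' (i+1) := by
      have := icode_shift z' z'per hipd (i+1)
      rw [show (i+1) + (ip - (i+1)) = ip from by ring] at this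
      exact this
    refine ⟨fun _ => ⟨?_, ?_, ?_⟩, fun h1 h2 => absurd h1 (by omega),
      fun h1 h2 => absurd h1 (by omega)⟩
    · rw [hshz]
      exact (com_A hn2 hper hinv hz'com hziv hzi1v).symm
    · rw [hshz']
      have := com_B hn2 hper hinv hz'com hziv hzi1v
      omega
    · intro k hk1 hk2 hk3 hk4
      have hki : ¬ (n:ℤ) ∣ (k - i) := fun h => hk3 (window_eq hn2 hk1 hk2 hi1 hi2 h)
      have hki1 : ¬ (n:ℤ) ∣ (k - (i+1)) := by
        intro h
        apply hk4
        have hdvd : (n:ℤ) ∣ (k - ip) := by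
          have h2 := dvd_sub h hipd
          rw [show (k - (i+1)) - (ip - (i+1)) = k - ip from by ring] at h2
          exact h2
        exact window_eq hn2 hk1 hk2 hiplb hipub hdvd
      exact (com_C hn2 hper hinv hz'com hki hki1).symm
  · -- conjugation case
    have hz'app : ∀ x : ℤ, z' x = affS n i (z (affS n i x)) := fun x => by
      rw [hz'def]; rfl
    have hna1 : z i ≠ i + 1 := by
      intro h
      apply hncom
      apply commute_of hn2 hper hinv h
      rw [← h]; exact hinv i
    have z'per : ∀ x : ℤ, z' (x + (n:ℤ)) = z' x + (n:ℤ) := fun x => by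
      rw [hz'app, hz'app, s_per hn2, hper, s_per hn2]
    have hshz' : icodeEntry z' ip = icodeEntry z' (i+1) := by
      have := icode_shift z' z'per hipd (i+1)
      rw [show (i+1) + (ip - (i+1)) = ip from by ring] at this
      exact this
    refine ⟨fun hvis => ⟨?_, ?_, ?_⟩, fun h1 h2 => ⟨?_, ?_⟩, fun h1 h2 => ?_⟩
    · rw [hshz]
      exact (conj_vis_A hn2 hper hinv hz'app hdes hna1 hvis).symm
    · rw [hshz']
      have := conj_vis_B hn2 hper hinv hz'app hdes hna1 hvis
      omega
    · intro k hk1 hk2 hk3 hk4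
      have hki : ¬ (n:ℤ) ∣ (k - i) := fun h => hk3 (window_eq hn2 hk1 hk2 hi1 hi2 h)
      have hki1 : ¬ (n:ℤ) ∣ (k - (i+1)) := by
        intro h
        apply hk4
        have hdvd : (n:ℤ) ∣ (k - ip) := by
          have h2 := dvd_sub h hipd
          rw [show (k - (i+1)) - (ip - (i+1)) = k - ip from by ring] at h2
          exact h2
        exact window_eq hn2 hk1 hk2 hiplb hipub hdvd
      by_cases hzkA : (n:ℤ) ∣ (z k - i)
      · exact (conj_classa hn2 hper hinv hz'app hdes hki hki1 hzkA).symm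
      · by_cases hzkB : (n:ℤ) ∣ (z k - (i+1))
        · exact (conj_classb_vis hn2 hper hinv hz'app hdes hna1 hvis hki hki1 hzkB).symm
        · exact (conj_generic hn2 hz'app hki hki1 hzkA hzkB).symm
    · -- case 2 : decrement at i
      have hagt : i + 1 < z i := by omega
      have := conj_case2_ki hn2 hper hinv hz'app h2 hagt
      omega
    · -- case 2 : unchanged elsewhere
      intro k hk1 hk2 hk3
      have hagt : i + 1 < z i := by omega
      have hki : ¬ (n:ℤ) ∣ (k - i) := fun h => hk3 (window_eq hn2 hk1 hk2 hi1 hi2 h)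
      by_cases hkB : (n:ℤ) ∣ (k - (i+1))
      · have s1 : icodeEntry z k = icodeEntry z (i+1) := by
          have := icode_shift z hper hkB (i+1)
          rw [show (i+1) + (k - (i+1)) = k from by ring] at this
          exact this
        have s2 : icodeEntry z' k = icodeEntry z' (i+1) := by
          have := icode_shift z' z'per hkB (i+1)
          rw [show (i+1) + (k - (i+1)) = k from by ring] at this
          exact this
        rw [s1, s2]
        exact (conj_case2_ki1 hn2 hper hinv hz'app h2 hagt).symm
      · by_cases hzkA : (n:ℤ) ∣ (z k - i)
        · exact (conj_classa hn2 hper hinv hz'app hdes hki hkB hzkA).symm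
        · by_cases hzkB : (n:ℤ) ∣ (z k - (i+1))
          · exfalso
            have hk' := trans_zi1 hper hinv hzkB
            apply hkB
            rw [show k - (i+1) = z k - (i+1) from by omega]
            exact hzkB
          · exact (conj_generic hn2 hz'app hki hkB hzkA hzkB).symm
    · -- case 3
      intro j hj1 hj2 hj3 hjmod
      have hb2 : i + 1 < z (i+1) := by
        rcases lt_or_eq_of_le (by omega : i + 1 ≤ z (i+1)) with h | h
        · exact h
        · exact absurd h.symm h2
      have hdj : (n:ℤ) ∣ (z (i+1) - j) := Int.dvd_of_emod_eq_zero hjmod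
      constructor
      · have s1 : icodeEntry z (z (i+1)) = icodeEntry z j := by
          have := icode_shift z hper hdj j
          rw [show j + (z (i+1) - j) = z (i+1) from by ring] at this
          exact this
        have s2 : icodeEntry z' (z (i+1)) = icodeEntry z' j := by
          have := icode_shift z' z'per hdj j
          rw [show j + (z (i+1) - j) = z (i+1) from by ring] at this
          exact this
        have := conj_case3_kb hn2 hper hinv hz'app hdes hb2
        omega
      · intro k hk1 hk2 hk3
        by_cases hkA : (n:ℤ) ∣ (k - i)
        · have hkeq : k = i := window_eq hn2 hk1 hk2 hi1 hi2 hkA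
          rw [hkeq]
          exact (conj_case3_ki hn2 hper hinv hz'app hdes hb2).symm
        · by_cases hkB : (n:ℤ) ∣ (k - (i+1))
          · have s1 : icodeEntry z k = icodeEntry z (i+1) := by
              have := icode_shift z hper hkB (i+1)
              rw [show (i+1) + (k - (i+1)) = k from by ring] at this
              exact this
            have s2 : icodeEntry z' k = icodeEntry z' (i+1) := by
              have := icode_shift z' z'per hkB (i+1)
              rw [show (i+1) + (k - (i+1)) = k from by ring] at this
              exact this
            rw [s1, s2]
            exact (conj_case3_ki1 hn2 hper hinv hz'app hdes hb2).symm
          · by_cases hzkA : (n:ℤ) ∣ (z k - i)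
            · exact (conj_classa hn2 hper hinv hz'app hdes hkA hkB hzkA).symm
            · by_cases hzkB : (n:ℤ) ∣ (z k - (i+1))
              · exfalso
                apply hk3
                have hk' := trans_zi1 hper hinv hzkB
                have hdvd : (n:ℤ) ∣ (k - j) := by
                  have h2' := dvd_add hdj hzkB
                  rw [show (z (i+1) - j) + (z k - (i+1)) = k - j from by omega] at h2'
                  exact h2'
                exact window_eq hn2 hk1 hk2 hj1 hj2 hdvd
              · exact (conj_generic hn2 hz'app hkA hkB hzkA hzkB).symm
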